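/- arXiv:1611.01415 — 5 statements merged into one kernel-verified Lean document; each statement's English description precedes it below -/
import Mathlib

section
/- Let K be an arbitrary field, let P(X,Y) ∈ K[[X,Y]] be a formal power series in two variables, and let f(X) ∈ K[[X]] be a formal power series with f(0) = 0 satisfying P(X, f(X)) = f(X) and P'_Y(0,0) = 0 (the coefficient of Y in P is 0). Then for every n ≥ 0, the coefficient of X^n in f equals the sum over m ≥ 1 of the coefficient of X^n Y^{m-1} in (1 − P'_Y(X,Y))·P(X,Y)^m, where this sum has only finitely many nonzero terms. -/
/-- Formal partial derivative of a two-variable power series with respect to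
`Y` (variable `1`): the coefficient of `X^i Y^j` is `(j+1)` times the
coefficient of `X^i Y^(j+1)` in `P`. -/
noncomputable def pderivY {K : Type*} [Field K] (P : MvPowerSeries (Fin 2) K) :
    MvPowerSeries (Fin 2) K :=
  fun d => ((d 1 + 1 : ℕ) : K) *
    MvPowerSeries.coeff (d + Finsupp.single 1 1) P

/-- Substitution of `f(X)` for `Y` in `P(X,Y)`: the series `P(X, f(X))`,
well defined (given coefficientwise) when `f` has zero constant term. -/
noncomputable def substY {K : Type*} [Field K] (P : MvPowerSeries (Fin 2) K)
    (f : PowerSeries K) : PowerSeries K :=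
  PowerSeries.mk fun n => ∑ i ∈ Finset.range (n + 1), ∑ j ∈ Finset.range (n + 1),
    MvPowerSeries.coeff (Finsupp.single 0 i + Finsupp.single 1 j) P *
      PowerSeries.coeff (n - i) (f ^ j)

namespace ImplicitAux

open Finset MvPowerSeries

/-- Char-free partial derivative in `Y`, over any commutative ring (agrees
definitionally with `pderivY` over a field). -/
noncomputable def pd {R : Type*} [CommRing R] (P : MvPowerSeries (Fin 2) R) :
    MvPowerSeries (Fin 2) R :=
  fun d => ((d 1 + 1 : ℕ) : R) * MvPowerSeries.coeff (d + Finsupp.single 1 1) P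

noncomputable def d2 (a b : ℕ) : Fin 2 →₀ ℕ := Finsupp.single 0 a + Finsupp.single 1 b

@[simp] lemma d2_apply0 (a b : ℕ) : d2 a b 0 = a := by simp [d2, Finsupp.single_apply]
@[simp] lemma d2_apply1 (a b : ℕ) : d2 a b 1 = b := by simp [d2, Finsupp.single_apply]

lemma eq_d2 (e : Fin 2 →₀ ℕ) : e = d2 (e 0) (e 1) := by ext a; fin_cases a <;> simp

lemma d2_add (a b c d : ℕ) : d2 a b + d2 c d = d2 (a + c) (b + d) := by
  ext x; fin_cases x <;> simp

section PD
variable {R : Type*} [CommRing R]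

lemma coeff_pd (P : MvPowerSeries (Fin 2) R) (d : Fin 2 →₀ ℕ) :
    coeff d (pd P) = ((d 1 + 1 : ℕ) : R) * coeff (d + Finsupp.single 1 1) P := rfl

lemma key_reindex (F G : MvPowerSeries (Fin 2) R) (d : Fin 2 →₀ ℕ) :
    ∑ q ∈ antidiagonal d,
      coeff (q.1 + Finsupp.single 1 1) F * coeff q.2 G * ((q.1 1 + 1 : ℕ) : R)
    = ∑ p ∈ antidiagonal (d + Finsupp.single 1 1),
        coeff p.1 F * coeff p.2 G * ((p.1 1 : ℕ) : R) := by
  have hfil : ∑ p ∈ (antidiagonal (d + Finsupp.single 1 1)).filter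
        (fun p : (Fin 2 →₀ ℕ) × (Fin 2 →₀ ℕ) => p.1 1 ≠ 0),
        coeff p.1 F * coeff p.2 G * ((p.1 1 : ℕ) : R)
      = ∑ p ∈ antidiagonal (d + Finsupp.single 1 1),
        coeff p.1 F * coeff p.2 G * ((p.1 1 : ℕ) : R) := by
    refine Finset.sum_filter_of_ne ?_
    intro x _ hne h0
    apply hne
    rw [h0]
    simp
  rw [← hfil]
  refine Finset.sum_nbij' (fun q => (q.1 + Finsupp.single 1 1, q.2))
    (fun p => (p.1 - Finsupp.single 1 1, p.2)) ?_ ?_ ?_ ?_ ?_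
  · rintro ⟨u, v⟩ hm
    rw [Finset.HasAntidiagonal.mem_antidiagonal] at hm
    simp only [Finset.mem_filter, Finset.HasAntidiagonal.mem_antidiagonal]
    constructor
    · rw [← hm, add_right_comm]
    · simp [Finsupp.add_apply]
  · rintro ⟨u, v⟩ hm
    simp only [Finset.mem_filter, Finset.HasAntidiagonal.mem_antidiagonal] at hm
    obtain ⟨hm, hu⟩ := hm
    rw [Finset.HasAntidiagonal.mem_antidiagonal]
    have he : Finsupp.single 1 1 ≤ u :=
      Finsupp.single_le_iff.mpr (Nat.one_le_iff_ne_zero.mpr hu)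
    apply add_right_cancel (b := Finsupp.single 1 1)
    calc u - Finsupp.single 1 1 + v + Finsupp.single 1 1
        = (u - Finsupp.single 1 1 + Finsupp.single 1 1) + v := by rw [add_right_comm]
      _ = u + v := by rw [tsub_add_cancel_of_le he]
      _ = d + Finsupp.single 1 1 := hm
  · rintro ⟨u, v⟩ _
    simp
  · rintro ⟨u, v⟩ hm
    simp only [Finset.mem_filter, Finset.HasAntidiagonal.mem_antidiagonal] at hm
    obtain ⟨_, hu⟩ := hm
    have he : Finsupp.single 1 1 ≤ u :=
      Finsupp.single_le_iff.mpr (Nat.one_le_iff_ne_zero.mpr hu)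
    simp [tsub_add_cancel_of_le he]
  · rintro ⟨u, v⟩ _
    simp [Finsupp.add_apply]

lemma pd_mul (F G : MvPowerSeries (Fin 2) R) :
    pd (F * G) = pd F * G + F * pd G := by
  classical
  ext d
  rw [map_add, coeff_pd, coeff_mul, coeff_mul, coeff_mul, Finset.mul_sum]
  calc ∑ p ∈ antidiagonal (d + Finsupp.single 1 1),
        ((d 1 + 1 : ℕ) : R) * (coeff p.1 F * coeff p.2 G)
      = ∑ p ∈ antidiagonal (d + Finsupp.single 1 1),
        (coeff p.1 F * coeff p.2 G * ((p.1 1 : ℕ) : R)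
          + coeff p.2 G * coeff p.1 F * ((p.2 1 : ℕ) : R)) := by
        refine Finset.sum_congr rfl ?_
        rintro ⟨u, v⟩ hm
        rw [Finset.HasAntidiagonal.mem_antidiagonal] at hm
        have h1 := DFunLike.congr_fun hm 1
        simp only [Finsupp.add_apply, Finsupp.single_eq_same] at h1
        have : ((d 1 + 1 : ℕ) : R) = ((u 1 : ℕ) : R) + ((v 1 : ℕ) : R) := by
          rw [← Nat.cast_add, h1]
        rw [this]; ring
    _ = _ := by
        rw [Finset.sum_add_distrib]
        congr 1
        · rw [← key_reindex]
          exact Finset.sum_congr rfl fun q _ => by rw [coeff_pd]; ring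
        · rw [← Finset.HasAntidiagonal.map_swap_antidiagonal (n := d + Finsupp.single 1 1), Finset.sum_map,
            ← Finset.HasAntidiagonal.map_swap_antidiagonal (n := d), Finset.sum_map]
          simp only [Function.Embedding.coeFn_mk, Prod.fst_swap, Prod.snd_swap]
          rw [← key_reindex]
          exact Finset.sum_congr rfl fun q _ => by rw [coeff_pd]; ring

lemma pd_pow (P : MvPowerSeries (Fin 2) R) : ∀ m : ℕ,
    pd (P ^ (m + 1)) = (m + 1) • (pd P * P ^ m) := by
  intro m
  induction m with
  | zero => simp
  | succ m ih =>
      rw [pow_succ, pd_mul, ih, pow_succ]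
      rw [succ_nsmul (pd P * (P ^ m * P)) (m + 1)]
      congr 1
      · rw [smul_mul_assoc]
        congr 1
        ring
      · ring

lemma pd_map {S : Type*} [CommRing S] (φ : R →+* S) (P : MvPowerSeries (Fin 2) R) :
    MvPowerSeries.map φ (pd P) = pd (MvPowerSeries.map φ P) := by
  ext d
  rw [coeff_map, coeff_pd, coeff_pd, coeff_map, map_mul, map_natCast]

end PD

lemma kl_char0 {F : Type*} [Field F] [CharZero F] (P : MvPowerSeries (Fin 2) F) (n k : ℕ) :
    coeff (d2 n (k + 1)) (P ^ (k + 1)) = coeff (d2 n k) (pd P * P ^ k) := by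
  have h := congrArg (coeff (d2 n k)) (pd_pow P k)
  rw [coeff_pd, map_nsmul, nsmul_eq_mul] at h
  have hd : d2 n k + Finsupp.single 1 1 = d2 n (k + 1) := by
    rw [d2, d2, add_assoc, ← Finsupp.single_add]
  rw [hd, d2_apply1] at h
  have hne : ((k + 1 : ℕ) : F) ≠ 0 := Nat.cast_ne_zero.mpr (Nat.succ_ne_zero k)
  apply mul_left_cancel₀ hne
  exact h

/-- The key combinatorial lemma (valid over any field, in any characteristic),
transferred from the characteristic-zero generic case. -/
lemma kl {K : Type*} [Field K] (P : MvPowerSeries (Fin 2) K) (n k : ℕ) :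
    coeff (d2 n (k + 1)) (P ^ (k + 1)) = coeff (d2 n k) (pd P * P ^ k) := by
  classical
  set R0 := MvPolynomial (Fin 2 →₀ ℕ) ℤ with hR0
  let Fr := FractionRing R0
  haveI : CharZero Fr := by
    refine ⟨fun a b h => ?_⟩
    have hinj := IsFractionRing.injective R0 Fr
    rw [← map_natCast (algebraMap R0 Fr) a, ← map_natCast (algebraMap R0 Fr) b] at h
    exact Nat.cast_injective (hinj h)
  set G : MvPowerSeries (Fin 2) R0 := fun e => MvPolynomial.X e with hG
  have h0 : coeff (d2 n (k + 1)) (G ^ (k + 1)) = coeff (d2 n k) (pd G * G ^ k) := by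
    apply IsFractionRing.injective R0 Fr
    have hmap : ∀ (d : Fin 2 →₀ ℕ) (Q : MvPowerSeries (Fin 2) R0),
        algebraMap R0 Fr (coeff d Q)
          = coeff d (MvPowerSeries.map (algebraMap R0 Fr) Q) := by
      intro d Q; rw [coeff_map]
    rw [hmap, hmap,
      show (MvPowerSeries.map (algebraMap R0 Fr)) (G ^ (k + 1))
        = ((MvPowerSeries.map (algebraMap R0 Fr)) G) ^ (k + 1) from map_pow _ _ _,
      show (MvPowerSeries.map (algebraMap R0 Fr)) (pd G * G ^ k)
        = (MvPowerSeries.map (algebraMap R0 Fr)) (pd G)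
          * (MvPowerSeries.map (algebraMap R0 Fr)) (G ^ k) from map_mul _ _ _,
      show (MvPowerSeries.map (algebraMap R0 Fr)) (G ^ k)
        = ((MvPowerSeries.map (algebraMap R0 Fr)) G) ^ k from map_pow _ _ _,
      pd_map]
    exact kl_char0 _ n k
  have := congrArg (MvPolynomial.eval₂Hom (Int.castRingHom K) (fun e => coeff e P)) h0
  set φ : R0 →+* K := MvPolynomial.eval₂Hom (Int.castRingHom K) (fun e => coeff e P) with hφ
  have hmapφ : ∀ (d : Fin 2 →₀ ℕ) (Q : MvPowerSeries (Fin 2) R0),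
      φ (coeff d Q) = coeff d (MvPowerSeries.map φ Q) := by
    intro d Q; rw [coeff_map]
  rw [hmapφ, hmapφ,
    show (MvPowerSeries.map φ) (G ^ (k + 1))
      = ((MvPowerSeries.map φ) G) ^ (k + 1) from map_pow _ _ _,
    show (MvPowerSeries.map φ) (pd G * G ^ k)
      = (MvPowerSeries.map φ) (pd G) * (MvPowerSeries.map φ) (G ^ k) from
        map_mul _ _ _,
    show (MvPowerSeries.map φ) (G ^ k)
      = ((MvPowerSeries.map φ) G) ^ k from map_pow _ _ _,
    pd_map] at this
  have hGP : MvPowerSeries.map φ G = P := by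
    ext e
    rw [coeff_map]
    show φ (MvPolynomial.X e) = _
    exact MvPolynomial.eval₂Hom_X' _ _ e
  rw [hGP] at this
  exact this

section SumLemmas
variable {M : Type*} [AddCommMonoid M]

lemma ad_assoc (n : ℕ) (F : ℕ → ℕ → ℕ → M) :
    ∑ p ∈ antidiagonal n, ∑ q ∈ antidiagonal p.2, F p.1 q.1 q.2
    = ∑ p ∈ antidiagonal n, ∑ q ∈ antidiagonal p.2, F q.1 p.1 q.2 := by
  rw [Finset.sum_sigma', Finset.sum_sigma']
  refine Finset.sum_nbij' (fun x => ⟨(x.2.1, x.1.1 + x.2.2), (x.1.1, x.2.2)⟩)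
    (fun x => ⟨(x.2.1, x.1.1 + x.2.2), (x.1.1, x.2.2)⟩) ?_ ?_ ?_ ?_ ?_ <;>
    rintro ⟨⟨a, m⟩, ⟨c, r⟩⟩ h <;>
    simp only [Finset.mem_sigma, Finset.HasAntidiagonal.mem_antidiagonal] at h ⊢ <;>
    simp_all <;> omega

lemma tri (B : ℕ) (F : ℕ → ℕ → M) :
    ∑ k ∈ range (B + 1), ∑ q ∈ antidiagonal k, F q.1 q.2
    = ∑ b ∈ range (B + 1), ∑ l ∈ range (B + 1 - b), F b l := by
  rw [Finset.sum_sigma', Finset.sum_sigma']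
  refine Finset.sum_nbij' (fun x => ⟨x.2.1, x.2.2⟩) (fun x => ⟨x.1 + x.2, (x.1, x.2)⟩)
    ?_ ?_ ?_ ?_ ?_
  · rintro ⟨k, b, l⟩ h
    simp only [Finset.mem_sigma, Finset.HasAntidiagonal.mem_antidiagonal, Finset.mem_range] at h
    dsimp only
    simp only [Finset.mem_sigma, Finset.mem_range]
    omega
  · rintro ⟨b, l⟩ h
    simp only [Finset.mem_sigma, Finset.mem_range] at h
    dsimp only
    simp only [Finset.mem_sigma, Finset.HasAntidiagonal.mem_antidiagonal, Finset.mem_range]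
    exact ⟨by omega, trivial⟩
  · rintro ⟨k, b, l⟩ h
    simp only [Finset.mem_sigma, Finset.HasAntidiagonal.mem_antidiagonal, Finset.mem_range] at h
    dsimp only
    rw [show b + l = k from h.2]
  · rintro ⟨b, l⟩ _
    rfl
  · rintro ⟨k, b, l⟩ _
    rfl

end SumLemmas

variable {K : Type*} [Field K]

lemma coeff_mul_d2 (P Q : MvPowerSeries (Fin 2) K) (n k : ℕ) :
    coeff (d2 n k) (P * Q) =
    ∑ p ∈ antidiagonal n, ∑ q ∈ antidiagonal k,
      coeff (d2 p.1 q.1) P * coeff (d2 p.2 q.2) Q := by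
  rw [coeff_mul]
  rw [← Finset.sum_product']
  refine Finset.sum_nbij' (fun u => ((u.1 0, u.2 0), (u.1 1, u.2 1)))
    (fun r => (d2 r.1.1 r.2.1, d2 r.1.2 r.2.2)) ?_ ?_ ?_ ?_ ?_
  · rintro ⟨u, v⟩ hm
    rw [Finset.HasAntidiagonal.mem_antidiagonal] at hm
    simp only [Finset.mem_product, Finset.HasAntidiagonal.mem_antidiagonal]
    constructor
    · have := DFunLike.congr_fun hm 0; simpa using this
    · have := DFunLike.congr_fun hm 1; simpa using this
  · rintro ⟨⟨a, m⟩, ⟨b, l⟩⟩ hm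
    simp only [Finset.mem_product, Finset.HasAntidiagonal.mem_antidiagonal] at hm
    rw [Finset.HasAntidiagonal.mem_antidiagonal, d2_add, hm.1, hm.2]
  · rintro ⟨u, v⟩ _
    simp only [Prod.mk.injEq]
    exact ⟨(eq_d2 u).symm, (eq_d2 v).symm⟩
  · rintro ⟨⟨a, m⟩, ⟨b, l⟩⟩ _
    simp
  · rintro ⟨u, v⟩ _
    rw [← eq_d2, ← eq_d2]

/-- Partial sums `S_j(n) = ∑_k [X^n Y^k] ((1 - P_Y) P^{k+j})`. -/
noncomputable def Sa (P : MvPowerSeries (Fin 2) K) (j n : ℕ) : K :=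
  ∑ k ∈ range (2 * n + 1), coeff (d2 n k) ((1 - pd P) * P ^ (k + j))

section Weights
variable {P : MvPowerSeries (Fin 2) K}
  (hp00 : coeff (0 : Fin 2 →₀ ℕ) P = 0)
  (hp01 : coeff (Finsupp.single 1 1) P = 0)
include hp00 hp01

lemma coeff_P_low {u : Fin 2 →₀ ℕ} (hu : 2 * u 0 + u 1 < 2) : coeff u P = 0 := by
  have h0 : u 0 = 0 := by omega
  have h1 : u 1 = 0 ∨ u 1 = 1 := by omega
  rcases h1 with h1 | h1
  · rw [eq_d2 u, h0, h1]
    have : d2 0 0 = (0 : Fin 2 →₀ ℕ) := by ext x; fin_cases x <;> simp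
    rw [this]; exact hp00
  · rw [eq_d2 u, h0, h1]
    have : d2 0 1 = Finsupp.single 1 1 := by ext x; fin_cases x <;> simp
    rw [this]; exact hp01

lemma wl : ∀ (m : ℕ) (d : Fin 2 →₀ ℕ), 2 * d 0 + d 1 < 2 * m → coeff d (P ^ m) = 0 := by
  intro m
  induction m with
  | zero => intro d h; omega
  | succ m ih =>
      intro d h
      rw [pow_succ', coeff_mul]
      refine Finset.sum_eq_zero ?_
      rintro ⟨u, v⟩ hm
      rw [Finset.HasAntidiagonal.mem_antidiagonal] at hm
      have h0 := DFunLike.congr_fun hm 0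
      have h1 := DFunLike.congr_fun hm 1
      simp only [Finsupp.add_apply] at h0 h1
      by_cases hv : 2 * v 0 + v 1 < 2 * m
      · rw [ih v hv, mul_zero]
      · have hu : 2 * u 0 + u 1 < 2 := by omega
        rw [coeff_P_low hp00 hp01 hu, zero_mul]

lemma gwl (m n k : ℕ) (h : 2 * n + k < 2 * m) :
    coeff (d2 n k) ((1 - pd P) * P ^ m) = 0 := by
  rw [sub_mul, one_mul, map_sub]
  rw [wl hp00 hp01 m (d2 n k) (by simpa using h)]
  rw [coeff_mul]
  rw [Finset.sum_eq_zero, sub_zero]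
  rintro ⟨u, v⟩ hm
  rw [Finset.HasAntidiagonal.mem_antidiagonal] at hm
  have h0 := DFunLike.congr_fun hm 0
  have h1 := DFunLike.congr_fun hm 1
  simp only [Finsupp.add_apply, d2_apply0, d2_apply1] at h0 h1
  rw [wl hp00 hp01 m v (by omega), mul_zero]

lemma Sa_vanish (j n : ℕ) (h : 2 * n < j) : Sa P j n = 0 :=
  Finset.sum_eq_zero fun k _ => gwl hp00 hp01 _ _ _ (by omega)

lemma Sa_zero (n : ℕ) : Sa P 0 n = if n = 0 then 1 else 0 := by
  classical
  have hterm : ∀ k, coeff (d2 n k) ((1 - pd P) * P ^ (k + 0))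
      = coeff (d2 n k) (P ^ k) - coeff (d2 n (k + 1)) (P ^ (k + 1)) := by
    intro k
    rw [add_zero, sub_mul, one_mul, map_sub, kl]
  rw [Sa]
  rw [Finset.sum_congr rfl fun k _ => hterm k]
  rw [Finset.sum_range_sub' (fun k => coeff (d2 n k) (P ^ k)) (2 * n + 1)]
  rw [wl hp00 hp01 (2 * n + 1) (d2 n (2 * n + 1)) (by simp; omega), sub_zero]
  rw [pow_zero]
  rw [MvPowerSeries.coeff_one]
  congr 1
  · simp only [eq_iff_iff]
    constructor
    · intro hd
      have := DFunLike.congr_fun hd 0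
      simpa using this
    · intro hn
      subst hn
      ext x; fin_cases x <;> simp

lemma Sa_succ (j' n : ℕ) :
    Sa P (j' + 1) n = ∑ p ∈ antidiagonal n, ∑ b ∈ range (2 * n + 1),
      coeff (d2 p.1 b) P * Sa P (j' + b) p.2 := by
  rw [Sa]
  have step1 : ∀ k, coeff (d2 n k) ((1 - pd P) * P ^ (k + (j' + 1)))
      = ∑ p ∈ antidiagonal n, ∑ q ∈ antidiagonal k,
          coeff (d2 p.1 q.1) P * coeff (d2 p.2 q.2) ((1 - pd P) * P ^ (k + j')) := by
    intro k
    rw [show (1 - pd P) * P ^ (k + (j' + 1)) = P * ((1 - pd P) * P ^ (k + j')) from by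
      rw [show k + (j' + 1) = (k + j') + 1 from rfl, pow_succ]; ring]
    exact coeff_mul_d2 P ((1 - pd P) * P ^ (k + j')) n k
  rw [Finset.sum_congr rfl fun k _ => step1 k]
  rw [Finset.sum_comm]
  refine Finset.sum_congr rfl ?_
  rintro ⟨a, m⟩ hp
  rw [Finset.HasAntidiagonal.mem_antidiagonal] at hp
  have step2 : ∀ k ∈ range (2 * n + 1),
      ∑ q ∈ antidiagonal k,
        coeff (d2 a q.1) P * coeff (d2 m q.2) ((1 - pd P) * P ^ (k + j'))
      = ∑ q ∈ antidiagonal k,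
        coeff (d2 a q.1) P * coeff (d2 m q.2) ((1 - pd P) * P ^ (q.2 + (j' + q.1))) := by
    intro k _
    refine Finset.sum_congr rfl ?_
    rintro ⟨b, l⟩ hq
    rw [Finset.HasAntidiagonal.mem_antidiagonal] at hq
    rw [show k + j' = l + (j' + b) from by omega]
  rw [Finset.sum_congr rfl step2]
  rw [show (2 : ℕ) * n + 1 = (2 * n) + 1 from rfl]
  rw [tri (2 * n)
    (fun b l => coeff (d2 a b) P * coeff (d2 m l) ((1 - pd P) * P ^ (l + (j' + b))))]
  refine Finset.sum_congr rfl ?_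
  intro b _
  rw [← Finset.mul_sum]
  congr 1
  rw [Sa]
  have h1 : ∑ l ∈ range (2 * n + 1 - b), coeff (d2 m l) ((1 - pd P) * P ^ (l + (j' + b)))
      = ∑ l ∈ range (2 * n + 1), coeff (d2 m l) ((1 - pd P) * P ^ (l + (j' + b))) := by
    refine Finset.sum_subset (Finset.range_subset_range.mpr (by omega)) ?_
    intro l _ hl
    rw [Finset.mem_range] at hl
    exact gwl hp00 hp01 _ _ _ (by omega)
  have h2 : ∑ l ∈ range (2 * m + 1), coeff (d2 m l) ((1 - pd P) * P ^ (l + (j' + b)))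
      = ∑ l ∈ range (2 * n + 1), coeff (d2 m l) ((1 - pd P) * P ^ (l + (j' + b))) := by
    refine Finset.sum_subset (Finset.range_subset_range.mpr (by omega)) ?_
    intro l _ hl
    rw [Finset.mem_range] at hl
    exact gwl hp00 hp01 _ _ _ (by omega)
  rw [h1, ← h2]

end Weights

section Tside
variable {P : MvPowerSeries (Fin 2) K} {f : PowerSeries K}
  (hf0 : PowerSeries.constantCoeff f = 0)
include hf0

lemma T_vanish : ∀ (j m : ℕ), m < j → PowerSeries.coeff m (f ^ j) = 0 := by
  intro j
  induction j with
  | zero => intro m h; omega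
  | succ j ih =>
      intro m h
      rw [pow_succ, PowerSeries.coeff_mul]
      refine Finset.sum_eq_zero ?_
      rintro ⟨c, r⟩ hm
      rw [Finset.HasAntidiagonal.mem_antidiagonal] at hm
      by_cases hc : c < j
      · rw [ih c hc, zero_mul]
      · have : r = 0 := by omega
        subst this
        rw [PowerSeries.coeff_zero_eq_constantCoeff, hf0, mul_zero]

variable (hPf : substY P f = f)
include hPf

lemma coeff_f_eq (m : ℕ) {B : ℕ} (hB : m < B) :
    PowerSeries.coeff m f
      = ∑ p ∈ antidiagonal m, ∑ b ∈ range B,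
          coeff (d2 p.1 b) P * PowerSeries.coeff p.2 (f ^ b) := by
  conv_lhs => rw [← hPf]
  rw [substY, PowerSeries.coeff_mk]
  rw [Finset.Nat.sum_antidiagonal_eq_sum_range_succ_mk
    (fun p => ∑ b ∈ range B, coeff (d2 p.1 b) P * PowerSeries.coeff p.2 (f ^ b)) m]
  refine Finset.sum_congr rfl ?_
  intro i hi
  rw [Finset.mem_range] at hi
  have hext : ∑ j ∈ range (m + 1),
        coeff (Finsupp.single 0 i + Finsupp.single 1 j) P * PowerSeries.coeff (m - i) (f ^ j)
      = ∑ j ∈ range B,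
        coeff (Finsupp.single 0 i + Finsupp.single 1 j) P
          * PowerSeries.coeff (m - i) (f ^ j) := by
    refine Finset.sum_subset (Finset.range_subset_range.mpr (by omega)) ?_
    intro j _ hj
    rw [Finset.mem_range] at hj
    rw [T_vanish hf0 j (m - i) (by omega), mul_zero]
  rw [hext]
  rfl

lemma T_succ (j' n : ℕ) :
    PowerSeries.coeff n (f ^ (j' + 1))
      = ∑ p ∈ antidiagonal n, ∑ b ∈ range (2 * n + 1),
          coeff (d2 p.1 b) P * PowerSeries.coeff p.2 (f ^ (j' + b)) := by
  rw [pow_succ, PowerSeries.coeff_mul]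
  have step1 : ∀ p ∈ antidiagonal n,
      PowerSeries.coeff (p : ℕ × ℕ).1 (f ^ j') * PowerSeries.coeff p.2 f
      = ∑ q ∈ antidiagonal p.2, ∑ b ∈ range (2 * n + 1),
          PowerSeries.coeff p.1 (f ^ j') *
            (coeff (d2 q.1 b) P * PowerSeries.coeff q.2 (f ^ b)) := by
    rintro ⟨c, m⟩ hm
    rw [Finset.HasAntidiagonal.mem_antidiagonal] at hm
    rw [coeff_f_eq hf0 hPf m (B := 2 * n + 1) (by omega), Finset.mul_sum]
    exact Finset.sum_congr rfl fun q _ => by rw [Finset.mul_sum]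
  rw [Finset.sum_congr rfl step1]
  rw [← ad_assoc n (fun a c r => ∑ b ∈ range (2 * n + 1),
    PowerSeries.coeff c (f ^ j') * (coeff (d2 a b) P * PowerSeries.coeff r (f ^ b)))]
  refine Finset.sum_congr rfl ?_
  rintro ⟨a, m⟩ _
  rw [Finset.sum_comm]
  refine Finset.sum_congr rfl ?_
  intro b _
  rw [pow_add, PowerSeries.coeff_mul, Finset.mul_sum]
  exact Finset.sum_congr rfl fun q _ => by ring

end Tside

section Main
variable {P : MvPowerSeries (Fin 2) K} {f : PowerSeries K}
  (hp00 : coeff (0 : Fin 2 →₀ ℕ) P = 0)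
  (hp01 : coeff (Finsupp.single 1 1) P = 0)
  (hf0 : PowerSeries.constantCoeff f = 0)
  (hPf : substY P f = f)
include hp00 hp01 hf0 hPf

lemma main_ind : ∀ (N n j : ℕ), 2 * n < j + N → Sa P j n = PowerSeries.coeff n (f ^ j) := by
  intro N
  induction N with
  | zero =>
      intro n j h
      rw [Sa_vanish hp00 hp01 j n (by omega), T_vanish hf0 j n (by omega)]
  | succ N ih =>
      intro n j h
      match j with
      | 0 =>
          rw [Sa_zero hp00 hp01 n, pow_zero, PowerSeries.coeff_one]
      | j' + 1 =>
          rw [Sa_succ hp00 hp01 j' n, T_succ hf0 hPf j' n]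
          refine Finset.sum_congr rfl ?_
          rintro ⟨a, m⟩ hp
          rw [Finset.HasAntidiagonal.mem_antidiagonal] at hp
          refine Finset.sum_congr rfl ?_
          intro b _
          by_cases hz : coeff (d2 a b) P = 0
          · rw [hz, zero_mul, zero_mul]
          · have hw : 2 ≤ 2 * a + b := by
              by_contra hlt
              push_neg at hlt
              exact hz (coeff_P_low hp00 hp01 (by simpa using hlt))
            rw [ih m (j' + b) (by omega)]

end Main

end ImplicitAux

/-- **Explicit implicit function theorem over an arbitrary field.**
If `f(0) = 0`, `P(X, f(X)) = f(X)` and `P'_Y(0,0) = 0`, then for every `n`,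
`[Xⁿ] f = ∑_{m ≥ 1} [Xⁿ Y^(m-1)] ((1 - P'_Y(X,Y)) · P(X,Y)^m)`,
the sum (indexed below by `k = m - 1`) having finite support. -/
theorem implicit_coeff_formula_arbitrary_field {K : Type*} [Field K]
    (P : MvPowerSeries (Fin 2) K) (f : PowerSeries K)
    (hf0 : PowerSeries.constantCoeff f = 0)
    (hPf : substY P f = f)
    (hPY : MvPowerSeries.coeff (Finsupp.single 1 1) P = 0) :
    ∀ n : ℕ,
      (Function.support fun k : ℕ =>
        MvPowerSeries.coeff (Finsupp.single 0 n + Finsupp.single 1 k)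
          ((1 - pderivY P) * P ^ (k + 1))).Finite ∧
      PowerSeries.coeff n f =
        ∑ᶠ k : ℕ,
          MvPowerSeries.coeff (Finsupp.single 0 n + Finsupp.single 1 k)
            ((1 - pderivY P) * P ^ (k + 1)) := by
  intro n
  have hp00 : MvPowerSeries.coeff (0 : Fin 2 →₀ ℕ) P = 0 := by
    have h0 := congrArg (PowerSeries.coeff 0) hPf
    rw [substY, PowerSeries.coeff_mk] at h0
    simp only [Finset.sum_range_one, Nat.sub_zero, pow_zero, Finsupp.single_zero,
      add_zero, zero_add] at h0
    rw [PowerSeries.coeff_zero_eq_constantCoeff, hf0] at h0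
    simpa using h0
  have hkey : ∀ k : ℕ,
      MvPowerSeries.coeff (Finsupp.single 0 n + Finsupp.single 1 k)
        ((1 - pderivY P) * P ^ (k + 1))
      = MvPowerSeries.coeff (ImplicitAux.d2 n k) ((1 - ImplicitAux.pd P) * P ^ (k + 1)) := by
    intro k; rfl
  have hsupp : (Function.support fun k : ℕ =>
      MvPowerSeries.coeff (Finsupp.single 0 n + Finsupp.single 1 k)
        ((1 - pderivY P) * P ^ (k + 1))) ⊆ ↑(Finset.range (2 * n + 1)) := by
    intro k hk
    simp only [Function.mem_support] at hk
    simp only [Finset.coe_range, Set.mem_Iio]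
    by_contra hge
    push_neg at hge
    exact hk (by rw [hkey k]; exact ImplicitAux.gwl hp00 hPY (k + 1) n k (by omega))
  constructor
  · exact Set.Finite.subset (Finset.range (2 * n + 1)).finite_toSet hsupp
  · rw [finsum_eq_finset_sum_of_support_subset _ hsupp]
    have : ∑ k ∈ Finset.range (2 * n + 1),
        MvPowerSeries.coeff (Finsupp.single 0 n + Finsupp.single 1 k)
          ((1 - pderivY P) * P ^ (k + 1)) = ImplicitAux.Sa P 1 n := rfl
    rw [this, ImplicitAux.main_ind hp00 hPY hf0 hPf (2 * n) n 1 (by omega), pow_one]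
end

section
/- Let K be a field of characteristic 0, let P(X,Y) ∈ K[[X,Y]] be a formal power series in two variables, and let f(X) ∈ K[[X]] be a formal power series with f(0) = 0 satisfying P(X, f(X)) = f(X) and P'_Y(0,0) = 0. Then for every n ≥ 0, the coefficient of X^n in f equals the sum over m ≥ 1 of (1/m) times the coefficient of X^n Y^{m-1} in P(X,Y)^m, where this sum has only finitely many nonzero terms. -/
open Finset

namespace ImplicitAux

variable {K : Type*} [Field K]

/-- Coefficient of `X^i Y^j`. -/
noncomputable def cf (i j : ℕ) (Q : MvPowerSeries (Fin 2) K) : K :=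
  MvPowerSeries.coeff (Finsupp.single 0 i + Finsupp.single 1 j) Q

lemma fin2_decomp (d : Fin 2 →₀ ℕ) :
    Finsupp.single 0 (d 0) + Finsupp.single 1 (d 1) = d := by
  ext i
  fin_cases i <;> simp [Finsupp.single_apply]

lemma e_apply0 (i j : ℕ) : (Finsupp.single 0 i + Finsupp.single 1 j : Fin 2 →₀ ℕ) 0 = i := by
  simp [Finsupp.single_apply]

lemma e_apply1 (i j : ℕ) : (Finsupp.single 0 i + Finsupp.single 1 j : Fin 2 →₀ ℕ) 1 = j := by
  simp [Finsupp.single_apply]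

lemma coeff_mul_rect (Q R : MvPowerSeries (Fin 2) K) (n m : ℕ) :
    cf n m (Q * R) = ∑ i ∈ range (n+1), ∑ j ∈ range (m+1),
      cf i j Q * cf (n-i) (m-j) R := by
  classical
  rw [cf, MvPowerSeries.coeff_mul]
  rw [← Finset.sum_product']
  refine Finset.sum_nbij' (fun p => (p.1 0, p.1 1))
    (fun q => (Finsupp.single 0 q.1 + Finsupp.single 1 q.2,
      Finsupp.single 0 (n - q.1) + Finsupp.single 1 (m - q.2))) ?_ ?_ ?_ ?_ ?_
  · intro p hp
    rw [Finset.HasAntidiagonal.mem_antidiagonal] at hp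
    have h0 : p.1 0 + p.2 0 = n := by
      have := congrArg (fun d => d 0) hp; simpa [e_apply0] using this
    have h1 : p.1 1 + p.2 1 = m := by
      have := congrArg (fun d => d 1) hp; simpa [e_apply1] using this
    simp only [mem_product, mem_range]
    omega
  · intro q hq
    simp only [mem_product, mem_range] at hq
    rw [Finset.HasAntidiagonal.mem_antidiagonal]
    ext i
    fin_cases i <;> simp [Finsupp.single_apply] <;> omega
  · intro p hp
    rw [Finset.HasAntidiagonal.mem_antidiagonal] at hp
    have h0 : p.1 0 + p.2 0 = n := by
      have := congrArg (fun d => d 0) hp; simpa [e_apply0] using this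
    have h1 : p.1 1 + p.2 1 = m := by
      have := congrArg (fun d => d 1) hp; simpa [e_apply1] using this
    have e1 : n - p.1 0 = p.2 0 := by omega
    have e2 : m - p.1 1 = p.2 1 := by omega
    dsimp only
    rw [Prod.ext_iff]
    refine ⟨fin2_decomp p.1, ?_⟩
    rw [e1, e2]; exact fin2_decomp p.2
  · intro q hq
    simp [e_apply0, e_apply1]
  · intro p hp
    rw [Finset.HasAntidiagonal.mem_antidiagonal] at hp
    have h0 : p.1 0 + p.2 0 = n := by
      have := congrArg (fun d => d 0) hp; simpa [e_apply0] using this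
    have h1 : p.1 1 + p.2 1 = m := by
      have := congrArg (fun d => d 1) hp; simpa [e_apply1] using this
    have e1 : n - p.1 0 = p.2 0 := by omega
    have e2 : m - p.1 1 = p.2 1 := by omega
    rw [cf, cf, e1, e2, fin2_decomp p.1, fin2_decomp p.2]


/-- The operator `Q ↦ Y · ∂Q/∂Y` , acting diagonally on coefficients. -/
noncomputable def Wop (Q : MvPowerSeries (Fin 2) K) : MvPowerSeries (Fin 2) K :=
  fun d => ((d 1 : ℕ) : K) * MvPowerSeries.coeff d Q

lemma coeff_Wop (Q : MvPowerSeries (Fin 2) K) (d : Fin 2 →₀ ℕ) :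
    MvPowerSeries.coeff d (Wop Q) = ((d 1 : ℕ) : K) * MvPowerSeries.coeff d Q := rfl

lemma cf_Wop (Q : MvPowerSeries (Fin 2) K) (i j : ℕ) :
    cf i j (Wop Q) = (j : K) * cf i j Q := by
  rw [cf, cf, coeff_Wop, e_apply1]

lemma Wop_mul (Q R : MvPowerSeries (Fin 2) K) :
    Wop (Q * R) = Wop Q * R + Q * Wop R := by
  classical
  ext d
  rw [coeff_Wop, map_add, MvPowerSeries.coeff_mul, MvPowerSeries.coeff_mul,
    MvPowerSeries.coeff_mul, Finset.mul_sum, ← Finset.sum_add_distrib]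
  refine Finset.sum_congr rfl ?_
  intro p hp
  rw [Finset.HasAntidiagonal.mem_antidiagonal] at hp
  have h1 : p.1 1 + p.2 1 = d 1 := by
    have := congrArg (fun e => e 1) hp; simpa using this
  rw [coeff_Wop, coeff_Wop]
  push_cast [← h1]
  ring

lemma Wop_pow (P : MvPowerSeries (Fin 2) K) (a : ℕ) :
    Wop (P ^ (a+1)) = ((a+1 : ℕ) : K) • (P ^ a * Wop P) := by
  induction a with
  | zero => simp [one_smul]
  | succ a ih =>
    have : P ^ (a+2) = P ^ (a+1) * P := by ring
    rw [this, Wop_mul, ih]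
    rw [smul_mul_assoc]
    have hP : P ^ (a+1) * Wop P = P ^ a * Wop P * P := by ring
    rw [hP]
    match_scalars
    ring


lemma vanish (P : MvPowerSeries (Fin 2) K) (hP00 : cf 0 0 P = 0) (hP01 : cf 0 1 P = 0) :
    ∀ m n j : ℕ, 2*n + j < 2*m → cf n j (P ^ m) = 0 := by
  intro m
  induction m with
  | zero => intro n j h; omega
  | succ m ih =>
    intro n j h
    have : P ^ (m+1) = P * P ^ m := by ring
    rw [this, coeff_mul_rect]
    refine Finset.sum_eq_zero ?_
    intro i hi
    refine Finset.sum_eq_zero ?_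
    intro j' hj'
    rw [mem_range] at hi hj'
    by_cases h2 : 2*i + j' ≤ 1
    · have : i = 0 ∧ (j' = 0 ∨ j' = 1) := by omega
      rcases this.2 with h3 | h3 <;> rw [this.1, h3]
      · rw [hP00, zero_mul]
      · rw [hP01, zero_mul]
    · rw [ih (n - i) (j - j') (by omega), mul_zero]

variable (K) in
lemma coeff_f_pow (f : PowerSeries K) (hf0 : PowerSeries.constantCoeff f = 0) :
    ∀ j c : ℕ, c < j → PowerSeries.coeff c (f ^ j) = 0 := by
  intro j
  induction j with
  | zero => intro c h; omega
  | succ j ih =>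
    intro c h
    have : f ^ (j+1) = f * f ^ j := by ring
    rw [this, PowerSeries.coeff_mul]
    refine Finset.sum_eq_zero ?_
    intro p hp
    rw [Finset.HasAntidiagonal.mem_antidiagonal] at hp
    by_cases h1 : p.1 = 0
    · have : PowerSeries.coeff p.1 f = 0 := by
        rw [h1, PowerSeries.coeff_zero_eq_constantCoeff, hf0]
      rw [this, zero_mul]
    · rw [ih p.2 (by omega), mul_zero]

variable (K) in
lemma coeff_mul_fpow (f g : PowerSeries K) (hf0 : PowerSeries.constantCoeff f = 0)
    (c n : ℕ) (h : n < c) : PowerSeries.coeff n (g * f ^ c) = 0 := by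
  rw [PowerSeries.coeff_mul]
  refine Finset.sum_eq_zero ?_
  intro p hp
  rw [Finset.HasAntidiagonal.mem_antidiagonal] at hp
  rw [coeff_f_pow K f hf0 c p.2 (by omega), mul_zero]


/-- Row `j` of `Q`: the coefficient of `Y^j` as a power series in `X`. -/
noncomputable def row (j : ℕ) (Q : MvPowerSeries (Fin 2) K) : PowerSeries K :=
  PowerSeries.mk fun i => cf i j Q

lemma coeff_substY (Q : MvPowerSeries (Fin 2) K) (f : PowerSeries K) (n : ℕ) :
    PowerSeries.coeff n (substY Q f) =
      ∑ i ∈ range (n+1), ∑ j ∈ range (n+1),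
        cf i j Q * PowerSeries.coeff (n-i) (f ^ j) := by
  rw [substY, PowerSeries.coeff_mk]; rfl

lemma coeff_row_mul (Q : MvPowerSeries (Fin 2) K) (f : PowerSeries K) (j n : ℕ) :
    PowerSeries.coeff n (row j Q * f ^ j) =
      ∑ i ∈ range (n+1), cf i j Q * PowerSeries.coeff (n-i) (f ^ j) := by
  rw [PowerSeries.coeff_mul, Finset.Nat.sum_antidiagonal_eq_sum_range_succ_mk]
  refine Finset.sum_congr rfl fun i _ => ?_
  rw [row, PowerSeries.coeff_mk]

lemma coeff_substY' (Q : MvPowerSeries (Fin 2) K) (f : PowerSeries K)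
    (hf0 : PowerSeries.constantCoeff f = 0) (n N : ℕ) (hnN : n ≤ N) :
    PowerSeries.coeff n (substY Q f) =
      ∑ j ∈ range (N+1), PowerSeries.coeff n (row j Q * f ^ j) := by
  rw [coeff_substY, Finset.sum_comm]
  have h1 : ∀ j ∈ range (n+1), PowerSeries.coeff n (row j Q * f ^ j) =
      ∑ i ∈ range (n+1), cf i j Q * PowerSeries.coeff (n-i) (f ^ j) :=
    fun j _ => coeff_row_mul Q f j n
  rw [← Finset.sum_congr rfl h1]
  refine Finset.sum_subset (by intro j hj; rw [mem_range] at *; omega) ?_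
  intro j hj hj'
  rw [mem_range] at hj hj'
  exact coeff_mul_fpow K f (row j Q) hf0 j n (by omega)

lemma row_mul (Q R : MvPowerSeries (Fin 2) K) (j : ℕ) :
    row j (Q * R) = ∑ p ∈ Finset.HasAntidiagonal.antidiagonal j, row p.1 Q * row p.2 R := by
  ext i
  rw [row, PowerSeries.coeff_mk, coeff_mul_rect, map_sum,
    Finset.Nat.sum_antidiagonal_eq_sum_range_succ_mk, Finset.sum_comm]
  refine Finset.sum_congr rfl fun j1 _ => ?_
  rw [PowerSeries.coeff_mul, Finset.Nat.sum_antidiagonal_eq_sum_range_succ_mk]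
  refine Finset.sum_congr rfl fun i1 _ => ?_
  rw [row, row, PowerSeries.coeff_mk, PowerSeries.coeff_mk]

lemma sum_antidiag_region (N n : ℕ) (hn : n < N) (F : ℕ → ℕ → K)
    (hF : ∀ a b, n < a + b → F a b = 0) :
    ∑ j ∈ range N, ∑ p ∈ Finset.HasAntidiagonal.antidiagonal j, F p.1 p.2 =
      ∑ a ∈ range (n+1), ∑ b ∈ range (n+1), F a b := by
  classical
  have hdisj : (↑(range N) : Set ℕ).PairwiseDisjoint (fun j => Finset.HasAntidiagonal.antidiagonal j) := by
    intro a _ b _ hab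
    simp only [Finset.disjoint_left]
    intro p hpa hpb
    rw [Finset.HasAntidiagonal.mem_antidiagonal] at hpa hpb
    exact hab (hpa ▸ hpb)
  rw [← Finset.sum_biUnion hdisj, ← Finset.sum_product']
  have hTsub : ∀ p : ℕ × ℕ, p.1 + p.2 ≤ n → p ∈ (range N).biUnion (fun j => Finset.HasAntidiagonal.antidiagonal j) := by
    intro p hp
    rw [Finset.mem_biUnion]
    exact ⟨p.1 + p.2, by rw [mem_range]; omega, by rw [Finset.HasAntidiagonal.mem_antidiagonal]⟩
  have hTsub2 : ∀ p : ℕ × ℕ, p.1 + p.2 ≤ n → p ∈ range (n+1) ×ˢ range (n+1) := by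
    intro p hp
    rw [Finset.mem_product, mem_range, mem_range]; omega
  set T := ((range (n+1)) ×ˢ (range (n+1))).filter (fun p => p.1 + p.2 ≤ n) with hT
  have e1 : ∑ p ∈ (range N).biUnion (fun j => Finset.HasAntidiagonal.antidiagonal j), F p.1 p.2
      = ∑ p ∈ T, F p.1 p.2 := by
    refine (Finset.sum_subset ?_ ?_).symm
    · intro p hp
      rw [hT, Finset.mem_filter] at hp
      exact hTsub p hp.2
    · intro p hp hpt
      refine hF p.1 p.2 ?_
      by_contra hc
      exact hpt (by rw [hT, Finset.mem_filter]; exact ⟨hTsub2 p (by omega), by omega⟩)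
  have e2 : ∑ p ∈ range (n+1) ×ˢ range (n+1), F p.1 p.2 = ∑ p ∈ T, F p.1 p.2 := by
    refine (Finset.sum_subset ?_ ?_).symm
    · intro p hp
      rw [hT, Finset.mem_filter] at hp
      exact hp.1
    · intro p hp hpt
      refine hF p.1 p.2 ?_
      by_contra hc
      exact hpt (by rw [hT, Finset.mem_filter]; exact ⟨hp, by omega⟩)
  rw [e1, e2]

lemma coeff_mul_congr (u u' v v' : PowerSeries K) (n : ℕ)
    (hu : ∀ m ≤ n, PowerSeries.coeff m u = PowerSeries.coeff m u')
    (hv : ∀ m ≤ n, PowerSeries.coeff m v = PowerSeries.coeff m v') :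
    PowerSeries.coeff n (u * v) = PowerSeries.coeff n (u' * v') := by
  rw [PowerSeries.coeff_mul, PowerSeries.coeff_mul]
  refine Finset.sum_congr rfl fun p hp => ?_
  rw [Finset.HasAntidiagonal.mem_antidiagonal] at hp
  rw [hu p.1 (by omega), hv p.2 (by omega)]


lemma substY_mul (Q R : MvPowerSeries (Fin 2) K) (f : PowerSeries K)
    (hf0 : PowerSeries.constantCoeff f = 0) :
    substY (Q * R) f = substY Q f * substY R f := by
  ext n
  set A : ℕ → PowerSeries K := fun a => row a Q * f ^ a with hA
  set B : ℕ → PowerSeries K := fun b => row b R * f ^ b with hB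
  have hF : ∀ a b, n < a + b → PowerSeries.coeff n (A a * B b) = 0 := by
    intro a b hab
    have : A a * B b = (row a Q * row b R) * f ^ (a + b) := by
      rw [hA, hB, pow_add]; ring
    rw [this]
    exact coeff_mul_fpow K f _ hf0 _ n hab
  have step1 : PowerSeries.coeff n (substY (Q * R) f) =
      ∑ j ∈ range (2*n+2), PowerSeries.coeff n (row j (Q*R) * f ^ j) :=
    coeff_substY' (Q*R) f hf0 n (2*n+1) (by omega)
  have step2 : ∀ j, PowerSeries.coeff n (row j (Q*R) * f ^ j) =
      ∑ p ∈ Finset.HasAntidiagonal.antidiagonal j, PowerSeries.coeff n (A p.1 * B p.2) := by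
    intro j
    rw [row_mul, Finset.sum_mul, map_sum]
    refine Finset.sum_congr rfl fun p hp => ?_
    rw [Finset.HasAntidiagonal.mem_antidiagonal] at hp
    congr 1
    rw [hA, hB, ← hp, pow_add]
    ring
  rw [step1, Finset.sum_congr rfl (fun j _ => step2 j),
    sum_antidiag_region (2*n+2) n (by omega) _ hF]
  have step4 : PowerSeries.coeff n (substY Q f * substY R f) =
      PowerSeries.coeff n ((∑ a ∈ range (n+1), A a) * (∑ b ∈ range (n+1), B b)) := by
    refine coeff_mul_congr _ _ _ _ n ?_ ?_
    · intro m hm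
      rw [coeff_substY' Q f hf0 m n hm, map_sum]
    · intro m hm
      rw [coeff_substY' R f hf0 m n hm, map_sum]
  rw [step4, Finset.sum_mul_sum, map_sum]
  refine Finset.sum_congr rfl fun a _ => ?_
  rw [map_sum]

lemma substY_pow (P : MvPowerSeries (Fin 2) K) (f : PowerSeries K)
    (hf0 : PowerSeries.constantCoeff f = 0) (hPf : substY P f = f) :
    ∀ k : ℕ, substY (P ^ (k+1)) f = f ^ (k+1) := by
  intro k
  induction k with
  | zero => simpa using hPf
  | succ k ih =>
    have : P ^ (k+2) = P ^ (k+1) * P := by ring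
    rw [this, substY_mul _ _ f hf0, ih, hPf, ← pow_succ]


lemma cf_smul (c : K) (T : MvPowerSeries (Fin 2) K) (i j : ℕ) :
    cf i j (c • T) = c * cf i j T := by
  rw [cf, cf, map_smul, smul_eq_mul]

lemma key [CharZero K] (P : MvPowerSeries (Fin 2) K) (k m n : ℕ) (hk : 1 ≤ k) (hm : 1 ≤ m) :
    cf n m (Wop (P ^ k) * P ^ m) = ((k : K) * m / ((k : K) + m)) * cf n m (P ^ (k+m)) := by
  obtain ⟨a, rfl⟩ : ∃ a, k = a + 1 := ⟨k - 1, by omega⟩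
  obtain ⟨b, rfl⟩ : ∃ b, m = b + 1 := ⟨m - 1, by omega⟩
  rw [show a + 1 + (b + 1) = a + b + 2 from by omega]
  have h1 : Wop (P ^ (a+1)) * P ^ (b+1) =
      ((a+1 : ℕ) : K) • (P ^ (a+b+1) * Wop P) := by
    rw [Wop_pow, smul_mul_assoc]
    congr 1
    ring
  have h2 : Wop (P ^ (a+b+2)) = ((a+b+2 : ℕ) : K) • (P ^ (a+b+1) * Wop P) :=
    Wop_pow P (a+b+1)
  have h3 : cf n (b+1) (Wop (P ^ (a+b+2))) =
      ((b+1 : ℕ) : K) * cf n (b+1) (P ^ (a+b+2)) := cf_Wop _ _ _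
  rw [h2, cf_smul] at h3
  rw [h1, cf_smul]
  set u := cf n (b+1) (P ^ (a+b+1) * Wop P) with hu
  set c := cf n (b+1) (P ^ (a+b+2)) with hc
  push_cast at h3 ⊢
  have hab : (a : K) + 1 + ((b : K) + 1) ≠ 0 := by
    exact_mod_cast (Nat.cast_ne_zero (R := K)).mpr (by omega : a + 1 + (b + 1) ≠ 0)
  field_simp
  linear_combination h3


/-- The target sum `S n k = ∑_{m=k}^{2n} (k/m) [X^n Y^(m-k)] P^m`. -/
noncomputable def Sform (P : MvPowerSeries (Fin 2) K) (n k : ℕ) : K :=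
  ∑ m ∈ Icc k (2*n), ((k : K)/(m : K)) * cf n (m-k) (P ^ m)

lemma Sform_big (P : MvPowerSeries (Fin 2) K) (hP00 : cf 0 0 P = 0) (hP01 : cf 0 1 P = 0)
    (n k : ℕ) (h : n < k) : Sform P n k = 0 := by
  rw [Sform]
  refine Finset.sum_eq_zero fun m hm => ?_
  rw [mem_Icc] at hm
  rw [vanish P hP00 hP01 m n (m-k) (by omega), mul_zero]

lemma main [CharZero K] (P : MvPowerSeries (Fin 2) K) (f : PowerSeries K)
    (hf0 : PowerSeries.constantCoeff f = 0) (hPf : substY P f = f)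
    (hP00 : cf 0 0 P = 0) (hP01 : cf 0 1 P = 0) :
    ∀ n k : ℕ, 1 ≤ k → PowerSeries.coeff n (f ^ k) = Sform P n k := by
  intro n
  induction n using Nat.strong_induction_on with
  | _ n IHn =>
  suffices inner : ∀ r k, 1 ≤ k → n ≤ k + r → PowerSeries.coeff n (f ^ k) = Sform P n k by
    intro k hk
    exact inner n k hk (by omega)
  intro r
  induction r using Nat.strong_induction_on with
  | _ r IHr =>
  intro k hk hnk
  by_cases hkn : n < k
  · rw [coeff_f_pow K f hf0 k n hkn, Sform_big P hP00 hP01 n k hkn]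
  push_neg at hkn
  have hsub : substY (P ^ k) f = f ^ k := by
    obtain ⟨k', rfl⟩ : ∃ k', k = k' + 1 := ⟨k - 1, by omega⟩
    exact substY_pow P f hf0 hPf k'
  have h0 : PowerSeries.coeff n (f ^ k) = ∑ i ∈ range (n+1), ∑ j ∈ range (n+1),
      cf i j (P ^ k) * PowerSeries.coeff (n-i) (f ^ j) := by
    rw [← hsub, coeff_substY]
  have h1 : PowerSeries.coeff n (f ^ k) =
      (∑ i ∈ range (n+1), ∑ j ∈ range n,
        cf i (j+1) (P ^ k) * PowerSeries.coeff (n-i) (f ^ (j+1))) + cf n 0 (P ^ k) := by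
    rw [h0]
    have e1 : ∀ i ∈ range (n+1), ∑ j ∈ range (n+1), cf i j (P ^ k) * PowerSeries.coeff (n-i) (f ^ j)
        = (∑ j ∈ range n, cf i (j+1) (P ^ k) * PowerSeries.coeff (n-i) (f ^ (j+1)))
          + cf i 0 (P ^ k) * PowerSeries.coeff (n-i) (f ^ 0) :=
      fun i _ => Finset.sum_range_succ' _ n
    rw [Finset.sum_congr rfl e1, Finset.sum_add_distrib]
    congr 1
    have e2 : ∀ i ∈ range (n+1), cf i 0 (P ^ k) * PowerSeries.coeff (n-i) (f ^ 0)
        = if i = n then cf n 0 (P ^ k) else 0 := by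
      intro i hi
      rw [mem_range] at hi
      rw [pow_zero, PowerSeries.coeff_one]
      by_cases hin : i = n
      · subst hin; simp
      · have hni : ¬(n - i = 0) := by omega
        simp [hin, hni]
    rw [Finset.sum_congr rfl e2, Finset.sum_ite_eq' (range (n+1)) n]
    simp
  have h2 : ∀ i ∈ range (n+1), ∀ j ∈ range n,
      cf i (j+1) (P ^ k) * PowerSeries.coeff (n-i) (f ^ (j+1))
        = cf i (j+1) (P ^ k) * Sform P (n-i) (j+1) := by
    intro i hi j hj
    rw [mem_range] at hi hj
    by_cases hi0 : i = 0
    · subst hi0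
      by_cases hj2 : j + 1 < 2*k
      · rw [vanish P hP00 hP01 k 0 (j+1) (by omega), zero_mul, zero_mul]
      · have hr : 1 ≤ r := by omega
        have := IHr (r-1) (by omega) (j+1) (by omega) (by omega)
        rw [Nat.sub_zero, this]
    · rw [IHn (n - i) (by omega) (j+1) (by omega)]
  have h3 : PowerSeries.coeff n (f ^ k) =
      (∑ i ∈ range (n+1), ∑ j ∈ range n, cf i (j+1) (P ^ k) * Sform P (n-i) (j+1))
        + cf n 0 (P ^ k) := by
    rw [h1]
    congr 1
    exact Finset.sum_congr rfl fun i hi => Finset.sum_congr rfl fun j hj => h2 i hi j hj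
  have h4 : ∀ i ∈ range (n+1), ∀ j ∈ range n, Sform P (n-i) (j+1)
      = ∑ m ∈ Icc 1 (2*n), (if j+1 ≤ m then ((j+1 : ℕ) : K)/(m : K) * cf (n-i) (m-(j+1)) (P ^ m) else 0) := by
    intro i hi j hj
    rw [mem_range] at hi
    have e1 : Sform P (n-i) (j+1) = ∑ m ∈ Icc (j+1) (2*n),
        ((j+1 : ℕ) : K)/(m : K) * cf (n-i) (m-(j+1)) (P ^ m) := by
      rw [Sform]
      refine Finset.sum_subset (Finset.Icc_subset_Icc_right (by omega)) ?_
      intro m hm hm'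
      rw [mem_Icc] at hm
      have h2ni : 2*(n-i) < m := by
        by_contra hc
        exact hm' (by rw [mem_Icc]; omega)
      rw [vanish P hP00 hP01 m (n-i) (m-(j+1)) (by omega), mul_zero]
    have e2 : Icc (j+1) (2*n) = (Icc 1 (2*n)).filter (fun m => j+1 ≤ m) := by
      ext m
      simp only [mem_Icc, Finset.mem_filter]
      omega
    rw [e1, e2, Finset.sum_filter]
  have h5 : PowerSeries.coeff n (f ^ k) =
      (∑ m ∈ Icc 1 (2*n), ∑ i ∈ range (n+1), ∑ j ∈ range n,
        cf i (j+1) (P ^ k) * (if j+1 ≤ m then ((j+1 : ℕ) : K)/(m : K) * cf (n-i) (m-(j+1)) (P ^ m) else 0))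
        + cf n 0 (P ^ k) := by
    rw [h3]
    congr 1
    rw [Finset.sum_congr rfl (fun i hi => Finset.sum_congr rfl (fun j hj => by
      rw [h4 i hi j hj, Finset.mul_sum]))]
    rw [Finset.sum_congr rfl (fun i (_ : i ∈ range (n+1)) => Finset.sum_comm), Finset.sum_comm]
  have h6 : ∀ m ∈ Icc 1 (2*n), (∑ i ∈ range (n+1), ∑ j ∈ range n,
      cf i (j+1) (P ^ k) * (if j+1 ≤ m then ((j+1 : ℕ) : K)/(m : K) * cf (n-i) (m-(j+1)) (P ^ m) else 0))
      = ((k : K)/((k : K)+(m : K))) * cf n m (P ^ (k+m)) := by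
    intro m hm
    rw [mem_Icc] at hm
    have hmK : (m : K) ≠ 0 := Nat.cast_ne_zero.mpr (by omega)
    have hkK : (k : K) ≠ 0 := Nat.cast_ne_zero.mpr (by omega)
    have hkmK : (k : K) + (m : K) ≠ 0 := by
      have : ((k + m : ℕ) : K) ≠ 0 := Nat.cast_ne_zero.mpr (by omega)
      push_cast at this
      exact this
    have ha : ∀ i ∈ range (n+1), ∀ j ∈ range n,
        cf i (j+1) (P ^ k) * (if j+1 ≤ m then ((j+1 : ℕ) : K)/(m : K) * cf (n-i) (m-(j+1)) (P ^ m) else 0)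
        = (1/(m : K)) * (if j+1 ≤ m then cf i (j+1) (Wop (P ^ k)) * cf (n-i) (m-(j+1)) (P ^ m) else 0) := by
      intro i _ j _
      by_cases hjm : j+1 ≤ m
      · rw [if_pos hjm, if_pos hjm, cf_Wop]
        push_cast
        ring
      · rw [if_neg hjm, if_neg hjm, mul_zero, mul_zero]
    rw [Finset.sum_congr rfl (fun i hi => Finset.sum_congr rfl (fun j hj => ha i hi j hj))]
    rw [Finset.sum_congr rfl (fun i (_ : i ∈ range (n+1)) => (Finset.mul_sum _ _ _).symm), ← Finset.mul_sum]
    have hb : ∀ i ∈ range (n+1),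
        (∑ j ∈ range n, if j+1 ≤ m then cf i (j+1) (Wop (P ^ k)) * cf (n-i) (m-(j+1)) (P ^ m) else 0)
        = ∑ j ∈ range m, cf i (j+1) (Wop (P ^ k)) * cf (n-i) (m-(j+1)) (P ^ m) := by
      intro i hi
      rw [mem_range] at hi
      rw [← Finset.sum_filter]
      refine Finset.sum_subset ?_ ?_
      · intro j hj
        rw [Finset.mem_filter, mem_range] at hj
        rw [mem_range]
        omega
      · intro j hj hj'
        rw [mem_range] at hj
        rw [Finset.mem_filter, mem_range] at hj'
        have hnj : n ≤ j := by
          by_contra hc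
          exact hj' ⟨by omega, by omega⟩
        rw [vanish P hP00 hP01 m (n-i) (m-(j+1)) (by omega), mul_zero]
    rw [Finset.sum_congr rfl hb]
    have hc : cf n m (Wop (P ^ k) * P ^ m)
        = ∑ i ∈ range (n+1), ∑ j ∈ range m, cf i (j+1) (Wop (P ^ k)) * cf (n-i) (m-(j+1)) (P ^ m) := by
      rw [coeff_mul_rect]
      refine Finset.sum_congr rfl fun i _ => ?_
      rw [Finset.sum_range_succ' (fun j => cf i j (Wop (P ^ k)) * cf (n-i) (m-j) (P ^ m)) m]
      have h00 : cf i 0 (Wop (P ^ k)) = 0 := by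
        rw [cf_Wop, Nat.cast_zero, zero_mul]
      rw [h00, zero_mul, add_zero]
    rw [← hc, key P k m n hk (by omega)]
    field_simp
  have h7 : PowerSeries.coeff n (f ^ k) =
      (∑ m ∈ Icc 1 (2*n), ((k : K)/((k : K)+(m : K))) * cf n m (P ^ (k+m))) + cf n 0 (P ^ k) := by
    rw [h5]
    congr 1
    exact Finset.sum_congr rfl h6
  -- now reindex the target Sform
  have h8 : Sform P n k = ∑ m ∈ range (2*n - k + 1), ((k : K)/((m+k : ℕ) : K)) * cf n m (P ^ (m+k)) := by
    rw [Sform]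
    refine Finset.sum_nbij' (fun M => M - k) (fun m => m + k) ?_ ?_ ?_ ?_ ?_
    · intro M hM
      rw [mem_Icc] at hM
      rw [mem_range]
      omega
    · intro m hmm
      rw [mem_range] at hmm
      rw [mem_Icc]
      omega
    · intro M hM
      rw [mem_Icc] at hM
      omega
    · intro m hmm
      omega
    · intro M hM
      rw [mem_Icc] at hM
      have hMk : M - k + k = M := by omega
      rw [hMk]
  have hkK : (k : K) ≠ 0 := Nat.cast_ne_zero.mpr (by omega)
  have h9 : Sform P n k = (∑ m ∈ range (2*n - k), ((k : K)/((m+1+k : ℕ) : K)) * cf n (m+1) (P ^ (m+1+k)))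
      + cf n 0 (P ^ k) := by
    rw [h8, Finset.sum_range_succ' (fun m => ((k : K)/((m+k : ℕ) : K)) * cf n m (P ^ (m+k))) (2*n-k)]
    congr 1
    simp [div_self hkK]
  have h10 : (∑ m ∈ Icc 1 (2*n), ((k : K)/((k : K)+(m : K))) * cf n m (P ^ (k+m)))
      = ∑ m ∈ range (2*n - k), ((k : K)/((m+1+k : ℕ) : K)) * cf n (m+1) (P ^ (m+1+k)) := by
    have e1 : (∑ m ∈ Icc 1 (2*n), ((k : K)/((k : K)+(m : K))) * cf n m (P ^ (k+m)))
        = ∑ m ∈ range (2*n), ((k : K)/((k : K)+((m+1 : ℕ) : K))) * cf n (m+1) (P ^ (k+(m+1))) := by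
      refine Finset.sum_nbij' (fun M => M - 1) (fun m => m + 1) ?_ ?_ ?_ ?_ ?_
      · intro M hM
        rw [mem_Icc] at hM
        rw [mem_range]
        omega
      · intro m hmm
        rw [mem_range] at hmm
        rw [mem_Icc]
        omega
      · intro M hM
        rw [mem_Icc] at hM
        omega
      · intro m hmm
        omega
      · intro M hM
        rw [mem_Icc] at hM
        have hM1 : M - 1 + 1 = M := by omega
        rw [hM1]
    have e2 : (∑ m ∈ range (2*n), ((k : K)/((k : K)+((m+1 : ℕ) : K))) * cf n (m+1) (P ^ (k+(m+1))))
        = ∑ m ∈ range (2*n - k), ((k : K)/((k : K)+((m+1 : ℕ) : K))) * cf n (m+1) (P ^ (k+(m+1))) := by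
      refine (Finset.sum_subset (Finset.range_subset_range.mpr (by omega)) ?_).symm
      intro m hmm hm'
      rw [mem_range] at hmm hm'
      rw [vanish P hP00 hP01 (k+(m+1)) n (m+1) (by omega), mul_zero]
    rw [e1, e2]
    refine Finset.sum_congr rfl fun m _ => ?_
    rw [show k+(m+1) = m+1+k from by omega]
    push_cast
    ring_nf
  rw [h7, h9, h10]

end ImplicitAux

/-- **Explicit implicit function theorem in characteristic zero.**
If `f(0) = 0`, `P(X, f(X)) = f(X)` and `P'_Y(0,0) = 0`, then for every `n`,
`[Xⁿ] f = ∑_{m ≥ 1} (1/m) · [Xⁿ Y^(m-1)] (P(X,Y)^m)`,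
the sum (indexed below by `k = m - 1`) having finite support. -/
theorem implicit_coeff_formula_char_zero {K : Type*} [Field K] [CharZero K]
    (P : MvPowerSeries (Fin 2) K) (f : PowerSeries K)
    (hf0 : PowerSeries.constantCoeff f = 0)
    (hPf : substY P f = f)
    (hPY : MvPowerSeries.coeff (Finsupp.single 1 1) P = 0) :
    ∀ n : ℕ,
      (Function.support fun k : ℕ =>
        (1 / ((k : K) + 1)) *
          MvPowerSeries.coeff (Finsupp.single 0 n + Finsupp.single 1 k)
            (P ^ (k + 1))).Finite ∧
      PowerSeries.coeff n f =
        ∑ᶠ k : ℕ,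
          (1 / ((k : K) + 1)) *
            MvPowerSeries.coeff (Finsupp.single 0 n + Finsupp.single 1 k)
              (P ^ (k + 1)) := by
  classical
  intro n
  have hP00 : ImplicitAux.cf 0 0 P = 0 := by
    have h := congrArg (PowerSeries.coeff 0) hPf
    rw [ImplicitAux.coeff_substY] at h
    simp only [zero_add, Finset.range_one, Finset.sum_singleton, pow_zero, Nat.sub_zero,
      PowerSeries.coeff_zero_eq_constantCoeff, map_one, mul_one, hf0] at h
    exact h
  have hP01 : ImplicitAux.cf 0 1 P = 0 := by
    rw [ImplicitAux.cf]
    simpa using hPY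
  have hterm : ∀ k : ℕ, 2*n ≤ k →
      (1 / ((k : K) + 1)) *
        MvPowerSeries.coeff (Finsupp.single 0 n + Finsupp.single 1 k) (P ^ (k + 1)) = 0 := by
    intro k hk
    have : ImplicitAux.cf n k (P ^ (k+1)) = 0 :=
      ImplicitAux.vanish P hP00 hP01 (k+1) n k (by omega)
    rw [ImplicitAux.cf] at this
    rw [this, mul_zero]
  have hsupp : (Function.support fun k : ℕ =>
      (1 / ((k : K) + 1)) *
        MvPowerSeries.coeff (Finsupp.single 0 n + Finsupp.single 1 k)
          (P ^ (k + 1))) ⊆ ↑(Finset.range (2*n)) := by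
    intro k hk
    simp only [Finset.coe_range, Set.mem_Iio]
    by_contra hc
    exact hk (hterm k (by omega))
  refine ⟨Set.Finite.subset (Finset.range (2*n)).finite_toSet hsupp, ?_⟩
  have hmain := ImplicitAux.main P f hf0 hPf hP00 hP01 n 1 le_rfl
  rw [pow_one] at hmain
  rw [hmain, finsum_eq_sum_of_support_subset _ hsupp]
  rw [ImplicitAux.Sform]
  refine Finset.sum_nbij' (fun M => M - 1) (fun k => k + 1) ?_ ?_ ?_ ?_ ?_
  · intro M hM
    rw [Finset.mem_Icc] at hM
    rw [Finset.mem_range]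
    omega
  · intro k hk
    rw [Finset.mem_range] at hk
    rw [Finset.mem_Icc]
    omega
  · intro M hM
    rw [Finset.mem_Icc] at hM
    omega
  · intro k hk
    omega
  · intro M hM
    rw [Finset.mem_Icc] at hM
    have hM1 : ((M - 1 : ℕ) : K) + 1 = (M : K) := by
      have hnat : (M - 1) + 1 = M := by omega
      exact_mod_cast congrArg (fun t : ℕ => (t : K)) hnat
    rw [show M - 1 + 1 = M from by omega, ImplicitAux.cf, hM1]
    push_cast
    ring
end

section
/- (Lagrange inversion formula over an arbitrary field.) Let K be an arbitrary field, let φ(Y) ∈ K[[Y]] be a formal power series with φ(0) ≠ 0, and let f(X) ∈ K[[X]] satisfy f(0) = 0 and f(X) = X·φ(f(X)). Then for every n ≥ 1, the coefficient of X^n in f equals the coefficient of Y^{n-1} in φ(Y)^n − Y·φ'(Y)·φ(Y)^{n-1}. -/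
/-- Composition `φ(f(X))` of one-variable power series, well defined
(given coefficientwise) when `f` has zero constant term. -/
noncomputable def comp1 {K : Type*} [Field K] (φ f : PowerSeries K) : PowerSeries K :=
  PowerSeries.mk fun n => ∑ j ∈ Finset.range (n + 1),
    PowerSeries.coeff j φ * PowerSeries.coeff n (f ^ j)

open PowerSeries Finset

namespace LagAux

variable {R S : Type*} [CommRing R] [CommRing S]

lemma coeff_map_derivative (g : R →+* S) (ψ : PowerSeries R) :
    PowerSeries.map g (PowerSeries.derivative R ψ)
      = PowerSeries.derivative S (PowerSeries.map g ψ) := by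
  ext n
  simp [PowerSeries.coeff_map, PowerSeries.coeff_derivative]

lemma crux_char0 {R : Type*} [CommRing R] [IsDomain R] [CharZero R]
    (v : PowerSeries R) (m : ℕ) (hm : 1 ≤ m) :
    PowerSeries.coeff m (v ^ m)
      = PowerSeries.coeff (m - 1) (PowerSeries.derivative R v * v ^ (m - 1)) := by
  have h1 : PowerSeries.derivative R (v ^ m)
      = m • (v ^ (m - 1) • PowerSeries.derivative R v) := Derivation.leibniz_pow _ v m
  have h2 := congrArg (PowerSeries.coeff (m - 1)) h1
  rw [PowerSeries.coeff_derivative, Nat.sub_add_cancel hm] at h2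
  have h3 : (PowerSeries.coeff (m-1)) (m • (v ^ (m - 1) • PowerSeries.derivative R v))
      = (m : R) * PowerSeries.coeff (m-1) (PowerSeries.derivative R v * v ^ (m-1)) := by
    rw [map_nsmul, nsmul_eq_mul, smul_eq_mul, mul_comm (v ^ (m-1))]
  rw [h3] at h2
  rw [show ((m - 1 : ℕ) : R) + 1 = (m : R) by rw [Nat.cast_sub hm]; push_cast; ring] at h2
  have hmne : (m : R) ≠ 0 := Nat.cast_ne_zero.mpr (by omega)
  apply mul_left_cancel₀ hmne
  rw [← h2]; ring

lemma crux {K : Type*} [Field K] (v : PowerSeries K) (m : ℕ) (hm : 1 ≤ m) :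
    PowerSeries.coeff m (v ^ m)
      = PowerSeries.coeff (m - 1) (PowerSeries.derivative K v * v ^ (m - 1)) := by
  classical
  set R := MvPolynomial ℕ ℤ
  set ψ : PowerSeries R := PowerSeries.mk fun i => MvPolynomial.X i with hψ
  -- crux for the generic series
  have hgen : PowerSeries.coeff m (ψ ^ m)
      = PowerSeries.coeff (m - 1) (PowerSeries.derivative R ψ * ψ ^ (m - 1)) := by
    set g : R →+* MvPolynomial ℕ ℚ := MvPolynomial.map (Int.castRingHom ℚ)
    have hginj : Function.Injective g :=
      MvPolynomial.map_injective _ Int.cast_injective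
    apply hginj
    have := crux_char0 (PowerSeries.map g ψ) m hm
    rw [← map_pow, PowerSeries.coeff_map] at this
    rw [this, ← coeff_map_derivative, ← map_pow, ← map_mul, PowerSeries.coeff_map]
  -- push forward to K
  set e : R →+* K := MvPolynomial.eval₂Hom (Int.castRingHom K)
    (fun i => PowerSeries.coeff i v) with he
  have hev : PowerSeries.map e ψ = v := by
    ext n
    simp only [hψ, PowerSeries.coeff_map, he, PowerSeries.coeff_mk]
    exact MvPolynomial.eval₂_X _ _ _
  calc PowerSeries.coeff m (v ^ m)
      = e (PowerSeries.coeff m (ψ ^ m)) := by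
        rw [← hev, ← map_pow, PowerSeries.coeff_map]
    _ = e (PowerSeries.coeff (m-1) (PowerSeries.derivative R ψ * ψ ^ (m-1))) := by rw [hgen]
    _ = _ := by
        rw [← hev, ← PowerSeries.coeff_map, map_mul, map_pow, coeff_map_derivative]


section FieldPart

variable {K : Type*} [Field K]

lemma coeff_pow_eq_zero {f : PowerSeries K} (hf0 : PowerSeries.constantCoeff f = 0)
    {n m : ℕ} (h : n < m) : PowerSeries.coeff n (f ^ m) = 0 := by
  have hdvd : (PowerSeries.X : PowerSeries K) ^ m ∣ f ^ m :=
    pow_dvd_pow_of_dvd (PowerSeries.X_dvd_iff.mpr hf0) m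
  exact PowerSeries.X_pow_dvd_iff.mp hdvd n h

lemma coeff_comp1 (φ f : PowerSeries K) (n : ℕ) :
    PowerSeries.coeff n (comp1 φ f)
      = ∑ j ∈ Finset.range (n+1), PowerSeries.coeff j φ * PowerSeries.coeff n (f ^ j) := by
  simp [comp1]

lemma coeff_comp1_pad (φ f : PowerSeries K) (hf0 : PowerSeries.constantCoeff f = 0)
    {n N : ℕ} (h : n < N) :
    PowerSeries.coeff n (comp1 φ f)
      = ∑ j ∈ Finset.range N, PowerSeries.coeff j φ * PowerSeries.coeff n (f ^ j) := by
  rw [coeff_comp1]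
  apply Finset.sum_subset (Finset.range_subset_range.mpr (by omega : n + 1 ≤ N))
  intro j hj hj'
  simp only [Finset.mem_range] at hj hj'
  rw [coeff_pow_eq_zero hf0 (by omega), mul_zero]

lemma coeff_comp1_mul (φ f g : PowerSeries K) (hf0 : PowerSeries.constantCoeff f = 0) (n : ℕ) :
    PowerSeries.coeff n (comp1 φ f * g) =
      ∑ m ∈ Finset.range (n+1),
        PowerSeries.coeff m φ * PowerSeries.coeff n (f ^ m * g) := by
  rw [PowerSeries.coeff_mul]
  have h1 : ∀ p ∈ Finset.HasAntidiagonal.antidiagonal n,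
      PowerSeries.coeff p.1 (comp1 φ f) * PowerSeries.coeff p.2 g
      = ∑ m ∈ Finset.range (n+1),
        PowerSeries.coeff m φ * (PowerSeries.coeff p.1 (f^m) * PowerSeries.coeff p.2 g) := by
    intro p hp
    have hp1 : p.1 < n + 1 := by
      have := Finset.HasAntidiagonal.mem_antidiagonal.mp hp; omega
    rw [coeff_comp1_pad φ f hf0 hp1, Finset.sum_mul]
    exact Finset.sum_congr rfl fun m _ => by ring
  rw [Finset.sum_congr rfl h1, Finset.sum_comm]
  refine Finset.sum_congr rfl fun m _ => ?_
  rw [← Finset.mul_sum, PowerSeries.coeff_mul]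

lemma comp1_sub (A B f : PowerSeries K) : comp1 (A - B) f = comp1 A f - comp1 B f := by
  ext n
  simp [coeff_comp1, sub_mul, Finset.sum_sub_distrib]

lemma comp1_one (f : PowerSeries K) : comp1 1 f = 1 := by
  ext n
  rw [coeff_comp1, Finset.sum_eq_single 0]
  · simp
  · intro j _ hj0; rw [PowerSeries.coeff_one, if_neg hj0, zero_mul]
  · intro h; exact absurd (Finset.mem_range.mpr (by omega)) h

lemma comp1_X (f : PowerSeries K) (hf0 : PowerSeries.constantCoeff f = 0) :
    comp1 PowerSeries.X f = f := by
  ext n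
  rw [coeff_comp1, Finset.sum_eq_single 1]
  · simp
  · intro j _ hj1
    rw [PowerSeries.coeff_X, if_neg hj1, zero_mul]
  · intro h
    simp only [Finset.mem_range] at h
    have hn : n = 0 := by omega
    subst hn
    simp [PowerSeries.coeff_X, hf0]

lemma comp1_mul (A B f : PowerSeries K) (hf0 : PowerSeries.constantCoeff f = 0) :
    comp1 (A * B) f = comp1 A f * comp1 B f := by
  ext n
  set T : ℕ × ℕ → K := fun p => PowerSeries.coeff p.1 A *
    (PowerSeries.coeff p.2 B * PowerSeries.coeff n (f ^ (p.1 + p.2))) with hTdef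
  have hRHS : PowerSeries.coeff n (comp1 A f * comp1 B f)
      = ∑ p ∈ Finset.range (n+1) ×ˢ Finset.range (n+1), T p := by
    rw [coeff_comp1_mul A f _ hf0, Finset.sum_product]
    refine Finset.sum_congr rfl fun a _ => ?_
    rw [mul_comm (f ^ a), coeff_comp1_mul B f _ hf0, Finset.mul_sum]
    refine Finset.sum_congr rfl fun b _ => ?_
    have hba : f ^ b * f ^ a = f ^ (a + b) := by rw [← pow_add, add_comm]
    rw [hba]
  have hfilter : ∑ p ∈ Finset.range (n+1) ×ˢ Finset.range (n+1), T p
      = ∑ p ∈ (Finset.range (n+1) ×ˢ Finset.range (n+1)).filter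
          (fun p => p.1 + p.2 ≤ n), T p := by
    refine (Finset.sum_filter_of_ne fun p hp hne => ?_).symm
    by_contra hgt
    refine hne ?_
    simp only [hTdef]
    rw [coeff_pow_eq_zero hf0 (by omega), mul_zero, mul_zero]
  have hdisj : Set.PairwiseDisjoint ↑(Finset.range (n+1))
      (Finset.HasAntidiagonal.antidiagonal : ℕ → Finset (ℕ × ℕ)) := by
    intro x _ y _ hxy
    refine Finset.disjoint_left.mpr fun p hp hp' => ?_
    have h1 := Finset.HasAntidiagonal.mem_antidiagonal.mp hp
    have h2 := Finset.HasAntidiagonal.mem_antidiagonal.mp hp'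
    exact hxy (by omega)
  have hLHS : PowerSeries.coeff n (comp1 (A * B) f)
      = ∑ p ∈ (Finset.range (n+1)).biUnion Finset.HasAntidiagonal.antidiagonal, T p := by
    rw [coeff_comp1, Finset.sum_biUnion hdisj]
    refine Finset.sum_congr rfl fun j _ => ?_
    rw [PowerSeries.coeff_mul, Finset.sum_mul]
    refine Finset.sum_congr rfl fun p hp => ?_
    simp only [hTdef]
    rw [Finset.HasAntidiagonal.mem_antidiagonal.mp hp]
    ring
  have hset : (Finset.range (n+1)).biUnion Finset.HasAntidiagonal.antidiagonal
      = (Finset.range (n+1) ×ˢ Finset.range (n+1)).filter (fun p => p.1 + p.2 ≤ n) := by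
    ext p
    simp only [Finset.mem_biUnion, Finset.mem_range, Finset.HasAntidiagonal.mem_antidiagonal,
      Finset.mem_filter, Finset.mem_product]
    constructor
    · rintro ⟨j, hj, hp⟩
      omega
    · rintro ⟨⟨h1, h2⟩, h3⟩
      exact ⟨p.1 + p.2, by omega, rfl⟩
  rw [hLHS, hRHS, hfilter, hset]

lemma comp1_pow (φ f : PowerSeries K) (hf0 : PowerSeries.constantCoeff f = 0) (j : ℕ) :
    comp1 (φ ^ j) f = (comp1 φ f) ^ j := by
  induction j with
  | zero => simpa using comp1_one f
  | succ j ih => rw [pow_succ, comp1_mul _ _ _ hf0, ih, pow_succ]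

lemma derivative_comp1 (φ f : PowerSeries K) (hf0 : PowerSeries.constantCoeff f = 0) :
    PowerSeries.derivative K (comp1 φ f)
      = comp1 (PowerSeries.derivative K φ) f * PowerSeries.derivative K f := by
  ext n
  rw [PowerSeries.coeff_derivative, coeff_comp1_pad φ f hf0 (show n + 1 < n + 2 by omega),
      Finset.sum_mul, coeff_comp1_mul _ f _ hf0, Finset.sum_range_succ']
  have h0 : PowerSeries.coeff 0 φ * PowerSeries.coeff (n+1) (f ^ 0) * ((n:K) + 1) = 0 := by
    rw [pow_zero, PowerSeries.coeff_one, if_neg (by omega), mul_zero, zero_mul]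
  rw [h0, add_zero]
  refine Finset.sum_congr rfl fun k _ => ?_
  have hd : PowerSeries.coeff (n+1) (f ^ (k+1)) * ((n:K) + 1)
      = PowerSeries.coeff n (PowerSeries.derivative K (f ^ (k+1))) := by
    rw [PowerSeries.coeff_derivative]
  have hpow : PowerSeries.derivative K (f ^ (k+1))
      = (k+1) • (f ^ k • PowerSeries.derivative K f) := by
    have := Derivation.leibniz_pow (PowerSeries.derivative K) f (k+1)
    simpa using this
  rw [mul_assoc, hd, hpow, map_nsmul, nsmul_eq_mul, smul_eq_mul,
      PowerSeries.coeff_derivative]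
  push_cast
  ring


end FieldPart

end LagAux

/-- **Lagrange inversion formula over an arbitrary field.**
If `φ(0) ≠ 0`, `f(0) = 0` and `f(X) = X · φ(f(X))`, then for every `n ≥ 1`,
`[Xⁿ] f = [Y^(n-1)] (φ(Y)ⁿ - Y · φ'(Y) · φ(Y)^(n-1))`. -/

theorem lagrange_inversion_arbitrary_field {K : Type*} [Field K]
    (φ f : PowerSeries K)
    (hφ : PowerSeries.constantCoeff φ ≠ 0)
    (hf0 : PowerSeries.constantCoeff f = 0)
    (hf : f = PowerSeries.X * comp1 φ f) :
    ∀ n : ℕ, 1 ≤ n →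
      PowerSeries.coeff n f =
        PowerSeries.coeff (n - 1)
          (φ ^ n - PowerSeries.X * PowerSeries.derivative K φ * φ ^ (n - 1)) := by
  intro n hn
  obtain ⟨k, rfl⟩ : ∃ k, n = k + 1 := ⟨n - 1, by omega⟩
  simp only [Nat.add_sub_cancel]
  set u := comp1 φ f with hu_def
  have hXu : f = PowerSeries.X * u := hf
  have hu0 : PowerSeries.constantCoeff u ≠ 0 := by
    have h : PowerSeries.coeff 0 u = PowerSeries.coeff 0 φ := by
      rw [hu_def, LagAux.coeff_comp1]
      simp
    rw [← PowerSeries.coeff_zero_eq_constantCoeff_apply, h,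
        PowerSeries.coeff_zero_eq_constantCoeff_apply]
    exact hφ
  set w := u⁻¹ with hw_def
  have huw : u * w = 1 := PowerSeries.mul_inv_cancel u hu0
  have hpow : ∀ a b : ℕ, u ^ a * w ^ (a + b) = w ^ b := by
    intro a b
    rw [pow_add, ← mul_assoc, ← mul_pow, huw, one_pow, one_mul]
  have hdf : PowerSeries.derivative K f
      = u + PowerSeries.X * PowerSeries.derivative K u := by
    rw [hXu, Derivation.leibniz, smul_eq_mul, smul_eq_mul, PowerSeries.derivative_X, mul_one]
    ring
  have hduw : PowerSeries.derivative K u * w + u * PowerSeries.derivative K w = 0 := by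
    have h := congrArg (PowerSeries.derivative K) huw
    rw [Derivation.leibniz, smul_eq_mul, smul_eq_mul, Derivation.map_one_eq_zero] at h
    linear_combination h
  have core : ∀ r : ℕ, PowerSeries.coeff r (PowerSeries.derivative K f * w ^ (r+1))
      = if r = 0 then 1 else 0 := by
    intro r
    have hsplit : PowerSeries.derivative K f * w ^ (r+1)
        = w ^ r + PowerSeries.X * (PowerSeries.derivative K u * w ^ (r+1)) := by
      rw [hdf, add_mul]
      congr 1
      · have h1 := hpow 1 r
        rw [pow_one] at h1
        rw [show r + 1 = 1 + r by omega, h1]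
      · ring
    rcases Nat.eq_zero_or_pos r with hr | hr
    · subst hr
      rw [hsplit]
      simp
    · rw [if_neg (by omega)]
      obtain ⟨s, rfl⟩ : ∃ s, r = s + 1 := ⟨r - 1, by omega⟩
      have h1 : PowerSeries.derivative K u * w = -(u * PowerSeries.derivative K w) := by
        linear_combination hduw
      have hA : PowerSeries.derivative K u * w ^ (s+1+1)
          = -(PowerSeries.derivative K w * w ^ s) := by
        have h2 := hpow 1 s
        rw [pow_one] at h2
        calc PowerSeries.derivative K u * w ^ (s+1+1)
            = (PowerSeries.derivative K u * w) * w ^ (s+1) := by ring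
          _ = -(u * PowerSeries.derivative K w) * w ^ (s+1) := by rw [h1]
          _ = -(PowerSeries.derivative K w * (u * w ^ (1+s))) := by ring
          _ = -(PowerSeries.derivative K w * w ^ s) := by rw [h2]
      rw [hsplit, hA, map_add, PowerSeries.coeff_succ_X_mul, map_neg,
          LagAux.crux w (s+1) (by omega)]
      simp
  have heval : ∀ m, m ≤ k →
      PowerSeries.coeff k (f ^ m * (PowerSeries.derivative K f * w ^ (k+1)))
        = if m = k then 1 else 0 := by
    intro m hm
    obtain ⟨r, rfl⟩ : ∃ r, k = r + m := ⟨k - m, by omega⟩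
    have hfm : f ^ m = PowerSeries.X ^ m * u ^ m := by rw [hXu, mul_pow]
    have hmw : u ^ m * w ^ (r + m + 1) = w ^ (r+1) := by
      have := hpow m (r+1)
      rwa [show m + (r+1) = r + m + 1 by omega] at this
    have hexp : f ^ m * (PowerSeries.derivative K f * w ^ (r + m + 1))
        = PowerSeries.X ^ m * (PowerSeries.derivative K f * w ^ (r+1)) := by
      calc f ^ m * (PowerSeries.derivative K f * w ^ (r + m + 1))
          = PowerSeries.X ^ m * (PowerSeries.derivative K f * (u ^ m * w ^ (r + m + 1))) := by
            rw [hfm]; ring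
        _ = PowerSeries.X ^ m * (PowerSeries.derivative K f * w ^ (r+1)) := by rw [hmw]
    rw [hexp, PowerSeries.coeff_X_pow_mul, core r]
    rcases Nat.eq_zero_or_pos r with hr | hr
    · subst hr; simp
    · rw [if_neg (by omega), if_neg (by omega)]
  set H := φ ^ (k+1) - PowerSeries.X * PowerSeries.derivative K φ * φ ^ k with hH_def
  have hIII : PowerSeries.coeff k
        (comp1 H f * (PowerSeries.derivative K f * w ^ (k+1)))
      = PowerSeries.coeff k H := by
    rw [LagAux.coeff_comp1_mul H f _ hf0, Finset.sum_eq_single k]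
    · rw [heval k le_rfl, if_pos rfl, mul_one]
    · intro m hm hmk
      rw [heval m (by simp only [Finset.mem_range] at hm; omega), if_neg hmk, mul_zero]
    · intro hk
      exact absurd (Finset.self_mem_range_succ k) hk
  have hH : comp1 H f
      = u ^ (k+1) - f * comp1 (PowerSeries.derivative K φ) f * u ^ k := by
    rw [hH_def, hu_def, LagAux.comp1_sub, LagAux.comp1_pow _ _ hf0,
        LagAux.comp1_mul _ _ _ hf0, LagAux.comp1_mul _ _ _ hf0,
        LagAux.comp1_X _ hf0, LagAux.comp1_pow _ _ hf0]
  have hchain : comp1 (PowerSeries.derivative K φ) f * PowerSeries.derivative K f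
      = PowerSeries.derivative K u := by
    rw [hu_def]
    exact (LagAux.derivative_comp1 φ f hf0).symm
  have e1 : u ^ (k+1) * w ^ (k+1) = 1 := by
    have := hpow (k+1) 0
    simpa using this
  have e0 : u ^ k * w ^ k = 1 := by rw [← mul_pow, huw, one_pow]
  have hfw : f * w = PowerSeries.X := by rw [hXu, mul_assoc, huw, mul_one]
  have hIV : comp1 H f * (PowerSeries.derivative K f * w ^ (k+1)) = u := by
    rw [hH]
    calc (u ^ (k+1) - f * comp1 (PowerSeries.derivative K φ) f * u ^ k)
          * (PowerSeries.derivative K f * w ^ (k+1))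
        = (u ^ (k+1) * w ^ (k+1)) * PowerSeries.derivative K f
          - (comp1 (PowerSeries.derivative K φ) f * PowerSeries.derivative K f)
            * (f * w) * (u ^ k * w ^ k) := by ring
      _ = PowerSeries.derivative K f - PowerSeries.X * PowerSeries.derivative K u := by
          rw [e1, e0, hfw, hchain]; ring
      _ = u := by rw [hdf]; ring
  have hfinal : PowerSeries.coeff (k+1) f = PowerSeries.coeff k u := by
    rw [hXu, PowerSeries.coeff_succ_X_mul]
  rw [hfinal, ← hIV, hIII]
end

section
/- (Lagrange inversion formula in characteristic 0.) Let K be a field of characteristic 0, let φ(Y) ∈ K[[Y]] be a formal power series with φ(0) ≠ 0, and let f(X) ∈ K[[X]] satisfy f(0) = 0 and f(X) = X·φ(f(X)). Then for every n ≥ 1, the coefficient of X^n in f equals (1/n) times the coefficient of Y^{n-1} in φ(Y)^n. -/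
namespace LagrangeAux

open PowerSeries

variable {K : Type*} [Field K]

lemma coeff_pow_eq_zero {f : PowerSeries K} (hf0 : constantCoeff f = 0)
    {m j : ℕ} (h : m < j) : coeff m (f ^ j) = 0 := by
  have hd : (X : K⟦X⟧) ^ j ∣ f ^ j :=
    pow_dvd_pow_of_dvd (X_dvd_iff.mpr hf0) j
  exact X_pow_dvd_iff.mp hd m h

lemma X_pow_dvd_pow {f : PowerSeries K} (hf0 : constantCoeff f = 0)
    {n j : ℕ} (h : n ≤ j) : (X : K⟦X⟧) ^ n ∣ f ^ j := by
  have h1 : (X : K⟦X⟧) ^ n ∣ X ^ j := pow_dvd_pow _ h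
  exact h1.trans (pow_dvd_pow_of_dvd (X_dvd_iff.mpr hf0) j)

lemma coeff_X_mul_derivative (v : K⟦X⟧) (m : ℕ) :
    coeff m (X * d⁄dX K v) = (m : K) * coeff m v := by
  cases m with
  | zero =>
    simp [coeff_zero_eq_constantCoeff]
  | succ m =>
    rw [coeff_succ_X_mul, coeff_derivative]
    push_cast
    ring

lemma keyK [CharZero K] (u w : K⟦X⟧) (hw : u * w = 1) {m : ℕ} (hm : 1 ≤ m) :
    coeff (m - 1) (d⁄dX K (X * u) * w ^ m) = if m = 1 then 1 else 0 := by
  have hDf : d⁄dX K (X * u) = X * d⁄dX K u + u := by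
    rw [Derivation.leibniz, derivative_X, smul_eq_mul, smul_eq_mul, mul_one, add_comm]
  have hDw : d⁄dX K w = -(w ^ 2 * d⁄dX K u) := by
    have h1 : u * d⁄dX K w + w * d⁄dX K u = 0 := by
      have h0 := congrArg (d⁄dX K) hw
      rwa [Derivation.leibniz, Derivation.map_one_eq_zero, smul_eq_mul, smul_eq_mul] at h0
    linear_combination w * h1 - (d⁄dX K w) * hw
  rcases eq_or_lt_of_le hm with h1 | h2
  · -- m = 1
    rw [if_pos h1.symm, ← h1, pow_one, hDf, add_mul, mul_assoc, hw]
    simp [coeff_zero_eq_constantCoeff]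
  · -- m ≥ 2
    rw [if_neg (by omega)]
    have huw : u * w ^ m = w ^ (m - 1) := by
      have h4 : w ^ m = w ^ (m - 1) * w := by rw [← pow_succ]; congr 1; omega
      rw [h4]
      linear_combination w ^ (m - 1) * hw
    have hDv : X * d⁄dX K (w ^ (m - 1)) = -((m - 1) • (X * (d⁄dX K u * w ^ m))) := by
      rw [Derivation.leibniz_pow, hDw, smul_eq_mul]
      have h3 : w ^ (m - 1 - 1) * w ^ 2 = w ^ m := by rw [← pow_add]; congr 1; omega
      rw [nsmul_eq_mul, nsmul_eq_mul]
      linear_combination (-(((m - 1 : ℕ) : K⟦X⟧) * X * d⁄dX K u)) * h3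
    have hXDv := coeff_X_mul_derivative (w ^ (m - 1)) (m - 1)
    rw [hDv, map_neg, map_nsmul, nsmul_eq_mul] at hXDv
    have hne : ((m - 1 : ℕ) : K) ≠ 0 := Nat.cast_ne_zero.mpr (by omega)
    have hkey : coeff (m - 1) (X * (d⁄dX K u * w ^ m)) = -coeff (m - 1) (w ^ (m - 1)) :=
      mul_left_cancel₀ hne (by linear_combination -hXDv)
    rw [hDf, add_mul, mul_assoc, huw, map_add, hkey]
    ring



lemma comp1_approx (φ f : PowerSeries K) (hf0 : constantCoeff f = 0) (n : ℕ) :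
    (X : K⟦X⟧) ^ n ∣ comp1 φ f - ∑ j ∈ Finset.range n, C (coeff j φ) * f ^ j := by
  rw [X_pow_dvd_iff]
  intro m hm
  rw [map_sub, comp1, coeff_mk, map_sum]
  simp_rw [coeff_C_mul]
  have hsum : ∑ j ∈ Finset.range (m + 1), coeff j φ * coeff m (f ^ j)
      = ∑ j ∈ Finset.range n, coeff j φ * coeff m (f ^ j) := by
    refine Finset.sum_subset (Finset.range_subset_range.mpr (by omega)) fun x hx hnx => ?_
    rw [Finset.mem_range] at hx hnx
    rw [coeff_pow_eq_zero hf0 (by omega), mul_zero]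
  rw [hsum, sub_self]

lemma aeval_approx (Q : Polynomial K) (f : K⟦X⟧) (hf0 : constantCoeff f = 0) (n : ℕ) :
    (X : K⟦X⟧) ^ n ∣ Polynomial.aeval f Q - ∑ j ∈ Finset.range n, C (Q.coeff j) * f ^ j := by
  set M := max n (Q.natDegree + 1) with hM
  have hMdeg : Q.natDegree < M := lt_of_lt_of_le (Nat.lt_succ_self _) (le_max_right _ _)
  rw [Polynomial.aeval_eq_sum_range' hMdeg]
  have hsub : Finset.range n ⊆ Finset.range M := Finset.range_subset_range.mpr (le_max_left _ _)
  rw [← Finset.sum_sdiff hsub]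
  simp_rw [smul_eq_C_mul]
  rw [add_sub_cancel_right]
  refine Finset.dvd_sum fun i hi => ?_
  rw [Finset.mem_sdiff, Finset.mem_range, Finset.mem_range] at hi
  exact (X_pow_dvd_pow hf0 (by omega)).mul_left _

lemma coe_trunc_approx (φ : PowerSeries K) (n : ℕ) :
    (X : K⟦X⟧) ^ n ∣ φ - ((trunc n φ : Polynomial K) : K⟦X⟧) := by
  rw [X_pow_dvd_iff]
  intro m hm
  rw [map_sub, Polynomial.coeff_coe, coeff_trunc, if_pos hm, sub_self]

end LagrangeAux

open LagrangeAux PowerSeries in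
/-- **Lagrange inversion formula in characteristic zero.**
If `φ(0) ≠ 0`, `f(0) = 0` and `f(X) = X · φ(f(X))`, then for every `n ≥ 1`,
`[Xⁿ] f = (1/n) · [Y^(n-1)] (φ(Y)ⁿ)`. -/
theorem lagrange_inversion_char_zero {K : Type*} [Field K] [CharZero K]
    (φ f : PowerSeries K)
    (hφ : PowerSeries.constantCoeff φ ≠ 0)
    (hf0 : PowerSeries.constantCoeff f = 0)
    (hf : f = PowerSeries.X * comp1 φ f) :
    ∀ n : ℕ, 1 ≤ n →
      PowerSeries.coeff n f =
        (1 / (n : K)) * PowerSeries.coeff (n - 1) (φ ^ n) := by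
  intro n hn
  set u := comp1 φ f with hu_def
  have hfXu : f = X * u := hf
  have hu0' : constantCoeff u ≠ 0 := by
    have h0 : coeff 0 u = coeff 0 φ := by
      simp [hu_def, comp1, coeff_mk]
    rw [← coeff_zero_eq_constantCoeff, h0, coeff_zero_eq_constantCoeff]
    exact hφ
  set w := u⁻¹ with hw_def
  have hw : u * w = 1 := PowerSeries.mul_inv_cancel u hu0'
  set P := trunc n φ with hP
  have hPdeg : P.natDegree < n := by
    obtain ⟨k, rfl⟩ : ∃ k, n = k + 1 := ⟨n - 1, by omega⟩
    exact natDegree_trunc_lt φ k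
  have hPc : ∀ j < n, P.coeff j = coeff j φ := fun j hj => by
    rw [hP, coeff_trunc, if_pos hj]
  have hS : Polynomial.aeval f P = ∑ j ∈ Finset.range n, C (coeff j φ) * f ^ j := by
    rw [Polynomial.aeval_eq_sum_range' hPdeg]
    exact Finset.sum_congr rfl fun j hj => by
      rw [smul_eq_C_mul, hPc j (Finset.mem_range.mp hj)]
  have h1 : (X : K⟦X⟧) ^ n ∣ u - Polynomial.aeval f P := by
    rw [hS]; exact comp1_approx φ f hf0 n
  have h2 : (X : K⟦X⟧) ^ n ∣ u ^ n - Polynomial.aeval f (P ^ n) := by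
    rw [map_pow]
    exact h1.trans (sub_dvd_pow_sub_pow _ _ n)
  set b : ℕ → K := fun j => coeff j (φ ^ n) with hb
  have hPn : ∀ j < n, (P ^ n).coeff j = b j := by
    intro j hj
    have hdvd : (X : K⟦X⟧) ^ n ∣ φ ^ n - ((P : K⟦X⟧)) ^ n :=
      (coe_trunc_approx φ n).trans (sub_dvd_pow_sub_pow _ _ n)
    have h5 := X_pow_dvd_iff.mp hdvd j hj
    rw [map_sub, sub_eq_zero] at h5
    rw [← Polynomial.coeff_coe, Polynomial.coe_pow]
    exact h5.symm
  have h3 : (X : K⟦X⟧) ^ n ∣ Polynomial.aeval f (P ^ n)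
      - ∑ j ∈ Finset.range n, C (b j) * f ^ j := by
    have h6 := aeval_approx (P ^ n) f hf0 n
    have hsum : ∑ j ∈ Finset.range n, C ((P ^ n).coeff j) * f ^ j
        = ∑ j ∈ Finset.range n, C (b j) * f ^ j :=
      Finset.sum_congr rfl fun j hj => by rw [hPn j (Finset.mem_range.mp hj)]
    rwa [hsum] at h6
  have h4 : (X : K⟦X⟧) ^ n ∣ u ^ n - ∑ j ∈ Finset.range n, C (b j) * f ^ j := by
    have h7 := dvd_add h2 h3
    rwa [sub_add_sub_cancel] at h7
  have hmain : coeff (n - 1) (d⁄dX K f) = b (n - 1) := by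
    have e1 : d⁄dX K f = d⁄dX K f * w ^ n * u ^ n := by
      have h8 : w ^ n * u ^ n = 1 := by rw [← mul_pow, mul_comm, hw, one_pow]
      rw [mul_assoc, h8, mul_one]
    have e2 : coeff (n - 1) (d⁄dX K f * w ^ n * u ^ n)
        = coeff (n - 1) (d⁄dX K f * w ^ n * (∑ j ∈ Finset.range n, C (b j) * f ^ j)) := by
      have hd : (X : K⟦X⟧) ^ n ∣ d⁄dX K f * w ^ n * u ^ n
          - d⁄dX K f * w ^ n * (∑ j ∈ Finset.range n, C (b j) * f ^ j) := by
        have h9 := h4.mul_left (d⁄dX K f * w ^ n)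
        rwa [mul_sub] at h9
      have h10 := X_pow_dvd_iff.mp hd (n - 1) (by omega)
      rwa [map_sub, sub_eq_zero] at h10
    rw [e1, e2, Finset.mul_sum, map_sum]
    have e3 : ∀ j ∈ Finset.range n,
        coeff (n - 1) (d⁄dX K f * w ^ n * (C (b j) * f ^ j))
          = if j = n - 1 then b j else 0 := by
      intro j hj
      have hjn : j < n := Finset.mem_range.mp hj
      have hterm : d⁄dX K f * w ^ n * (C (b j) * f ^ j)
          = C (b j) * (X ^ j * (d⁄dX K f * w ^ (n - j))) := by
        have hwn : w ^ n = w ^ (n - j) * w ^ j := by rw [← pow_add]; congr 1; omega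
        have hwu : w ^ j * u ^ j = 1 := by rw [← mul_pow, mul_comm, hw, one_pow]
        calc d⁄dX K f * w ^ n * (C (b j) * f ^ j)
            = C (b j) * (X ^ j * (d⁄dX K f * w ^ (n - j))) * (w ^ j * u ^ j) := by
              rw [hfXu, hwn, mul_pow]; ring
          _ = C (b j) * (X ^ j * (d⁄dX K f * w ^ (n - j))) := by rw [hwu, mul_one]
      rw [hterm, coeff_C_mul, coeff_X_pow_mul', if_pos (by omega : j ≤ n - 1)]
      have hidx : n - 1 - j = (n - j) - 1 := by omega
      have hK : coeff ((n - j) - 1) (d⁄dX K (X * u) * w ^ (n - j))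
          = if n - j = 1 then 1 else 0 := keyK u w hw (by omega)
      rw [hidx, hfXu, hK]
      by_cases hcase : j = n - 1
      · rw [if_pos (by omega), if_pos hcase, mul_one]
      · rw [if_neg (by omega), if_neg hcase, mul_zero]
    rw [Finset.sum_congr rfl e3, Finset.sum_ite_eq' (Finset.range n) (n - 1),
      if_pos (Finset.mem_range.mpr (by omega))]
  have hcoeff : coeff (n - 1) (d⁄dX K f) = coeff n f * n := by
    rw [coeff_derivative]
    have h11 : n - 1 + 1 = n := by omega
    rw [h11]
    push_cast [Nat.cast_sub hn]
    ring
  rw [hcoeff] at hmain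
  have hn0 : (n : K) ≠ 0 := Nat.cast_ne_zero.mpr (by omega)
  rw [hb] at hmain
  field_simp
  linear_combination hmain
end

section
/- (Furstenberg-type diagonal formula over an arbitrary field.) Let K be an arbitrary field, let Q(X,Y) ∈ K[[X,Y]], and let f(X) ∈ K[[X]] satisfy f(0) = 0, Q(X, f(X)) = 0, and Q'_Y(0,0) ≠ 0. Let Q(XY,Y) ∈ K[[X,Y]] denote the power series obtained from Q by substituting XY for X. Then there exists a unique S(X,Y) ∈ K[[X,Y]] with S(X,Y)·Q(XY,Y) = Y^2·Q'_Y(XY,Y), and for every n ≥ 0 the coefficient of X^n in f equals the coefficient of X^n Y^n in S; i.e., f(X) = 𝒟(Y^2 Q'_Y(XY,Y)/Q(XY,Y)) where 𝒟 denotes the diagonal. -/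
/-- Substitution `X ↦ XY`, `Y ↦ Y` in a two-variable power series:
the monomial `X^i Y^j` is sent to `X^i Y^(i+j)`. -/
noncomputable def substXY {K : Type*} [Field K] (Q : MvPowerSeries (Fin 2) K) :
    MvPowerSeries (Fin 2) K :=
  fun d => if d 0 ≤ d 1 then
    MvPowerSeries.coeff (Finsupp.single 0 (d 0) + Finsupp.single 1 (d 1 - d 0)) Q
  else 0


open Finset

namespace Furst

variable {K : Type*} [Field K]

noncomputable def ind (a b : ℕ) : Fin 2 →₀ ℕ := Finsupp.single 0 a + Finsupp.single 1 b

@[simp] lemma ind_apply0 (a b : ℕ) : ind a b 0 = a := by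
  simp [ind, Finsupp.single_apply]

@[simp] lemma ind_apply1 (a b : ℕ) : ind a b 1 = b := by
  simp [ind, Finsupp.single_apply]

lemma eq_ind (d : Fin 2 →₀ ℕ) : d = ind (d 0) (d 1) := by
  ext i; fin_cases i <;> simp

lemma ind_add (a b c d : ℕ) : ind a b + ind c d = ind (a + c) (b + d) := by
  ext i; fin_cases i <;> simp

lemma ind_zero : ind 0 0 = 0 := by ext i; fin_cases i <;> simp

lemma single_one_eq (k : ℕ) : Finsupp.single 1 k = ind 0 k := by
  ext i; fin_cases i <;> simp

lemma coeff_mul_ind (φ ψ : MvPowerSeries (Fin 2) K) (a b : ℕ) :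
    MvPowerSeries.coeff (ind a b) (φ * ψ) =
      ∑ i ∈ range (a + 1), ∑ j ∈ range (b + 1),
        MvPowerSeries.coeff (ind i j) φ *
          MvPowerSeries.coeff (ind (a - i) (b - j)) ψ := by
  rw [MvPowerSeries.coeff_mul, ← Finset.sum_product']
  apply Finset.sum_nbij' (i := fun p => (p.1 0, p.1 1))
    (j := fun p => (ind p.1 p.2, ind (a - p.1) (b - p.2)))
  · intro p hp
    rw [Finset.HasAntidiagonal.mem_antidiagonal] at hp
    have h0 : p.1 0 + p.2 0 = a := by
      have := congrArg (fun d => d 0) hp; simpa using this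
    have h1 : p.1 1 + p.2 1 = b := by
      have := congrArg (fun d => d 1) hp; simpa using this
    simp only [Finset.mem_product, Finset.mem_range]
    omega
  · intro p hp
    simp only [Finset.mem_product, Finset.mem_range] at hp
    rw [Finset.HasAntidiagonal.mem_antidiagonal, ind_add]
    congr 1 <;> omega
  · intro p hp
    rw [Finset.HasAntidiagonal.mem_antidiagonal] at hp
    have h0 : p.1 0 + p.2 0 = a := by
      have := congrArg (fun d => d 0) hp; simpa using this
    have h1 : p.1 1 + p.2 1 = b := by
      have := congrArg (fun d => d 1) hp; simpa using this
    have e1 : ind (p.1 0) (p.1 1) = p.1 := (eq_ind p.1).symm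
    have e2 : ind (a - p.1 0) (b - p.1 1) = p.2 := by
      rw [eq_ind p.2]; congr 1 <;> omega
    simp [e1, e2]
  · intro p hp
    simp
  · intro p hp
    rw [Finset.HasAntidiagonal.mem_antidiagonal] at hp
    have h0 : p.1 0 + p.2 0 = a := by
      have := congrArg (fun d => d 0) hp; simpa using this
    have h1 : p.1 1 + p.2 1 = b := by
      have := congrArg (fun d => d 1) hp; simpa using this
    have e1 : ind (p.1 0) (p.1 1) = p.1 := (eq_ind p.1).symm
    have e2 : ind (a - p.1 0) (b - p.1 1) = p.2 := by
      rw [eq_ind p.2]; congr 1 <;> omega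
    rw [e1, e2]

-- order lemma
lemma coeff_pow_eq_zero {f : PowerSeries K} (hf0 : PowerSeries.constantCoeff f = 0)
    {m j : ℕ} (h : m < j) : PowerSeries.coeff m (f ^ j) = 0 := by
  have : (PowerSeries.X : PowerSeries K) ^ j ∣ f ^ j :=
    pow_dvd_pow_of_dvd (PowerSeries.X_dvd_iff.mpr hf0) j
  exact (PowerSeries.X_pow_dvd_iff.mp this) m h

lemma filter_range_eq (m i : ℕ) (h : i ≤ m) :
    (range (m + 1)).filter (fun k => i + k ≤ m) = range (m - i + 1) := by
  ext k; simp only [mem_filter, mem_range]; omega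

lemma triangle_swap {M : Type*} [AddCommMonoid M] (m : ℕ) (F : ℕ → ℕ → M) :
    ∑ i ∈ range (m + 1), ∑ k ∈ range (m - i + 1), F i k
      = ∑ k ∈ range (m + 1), ∑ i ∈ range (m - k + 1), F i k := by
  have key : ∀ (G : ℕ → ℕ → M), ∀ i ∈ range (m + 1),
      ∑ k ∈ range (m - i + 1), G i k = ∑ k ∈ range (m + 1), if i + k ≤ m then G i k else 0 := by
    intro G i hi
    rw [← Finset.sum_filter, filter_range_eq m i (by simpa using Nat.lt_succ_iff.mp (mem_range.mp hi))]
  rw [Finset.sum_congr rfl (key F), Finset.sum_comm,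
    Finset.sum_congr rfl (key (fun k i => F i k))]
  apply Finset.sum_congr rfl
  intro k _
  apply Finset.sum_congr rfl
  intro i _
  rw [Nat.add_comm]


/-- the `l`-th column `u_l = ∑_{j≥0} q_{•,l+1+j} f^j` of the cofactor. -/
noncomputable def ucol (Q : MvPowerSeries (Fin 2) K) (f : PowerSeries K) (l : ℕ) :
    PowerSeries K :=
  PowerSeries.mk fun m => ∑ i ∈ range (m + 1), ∑ j ∈ range (m + 1),
    MvPowerSeries.coeff (ind i (l + 1 + j)) Q * PowerSeries.coeff (m - i) (f ^ j)

noncomputable def Tser (Q : MvPowerSeries (Fin 2) K) (f : PowerSeries K) :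
    MvPowerSeries (Fin 2) K :=
  fun d => if d 0 ≤ d 1 then PowerSeries.coeff (d 0) (ucol Q f (d 1 - d 0)) else 0

noncomputable def Tser' (Q : MvPowerSeries (Fin 2) K) (f : PowerSeries K) :
    MvPowerSeries (Fin 2) K :=
  fun d => if d 0 ≤ d 1 then
    ((d 1 - d 0 + 1 : ℕ) : K) * PowerSeries.coeff (d 0) (ucol Q f (d 1 - d 0 + 1)) else 0

noncomputable def Vser (f : PowerSeries K) : MvPowerSeries (Fin 2) K :=
  fun d => if d 1 ≤ d 0 then PowerSeries.coeff (d 0) (f ^ (d 0 - d 1)) else 0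

noncomputable def Fser (f : PowerSeries K) : MvPowerSeries (Fin 2) K :=
  fun d => if d 0 = d 1 then PowerSeries.coeff (d 0) f else 0

lemma coeff_Tser (Q : MvPowerSeries (Fin 2) K) (f : PowerSeries K) (a b : ℕ) :
    MvPowerSeries.coeff (ind a b) (Tser Q f) =
      if a ≤ b then PowerSeries.coeff a (ucol Q f (b - a)) else 0 := by
  show Tser Q f (ind a b) = _
  simp [Tser]

lemma coeff_Tser' (Q : MvPowerSeries (Fin 2) K) (f : PowerSeries K) (a b : ℕ) :
    MvPowerSeries.coeff (ind a b) (Tser' Q f) =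
      if a ≤ b then ((b - a + 1 : ℕ) : K) * PowerSeries.coeff a (ucol Q f (b - a + 1)) else 0 := by
  show Tser' Q f (ind a b) = _
  simp [Tser']

lemma coeff_Vser (f : PowerSeries K) (a b : ℕ) :
    MvPowerSeries.coeff (ind a b) (Vser f) =
      if b ≤ a then PowerSeries.coeff a (f ^ (a - b)) else 0 := by
  show Vser f (ind a b) = _
  simp [Vser]

lemma coeff_Fser (f : PowerSeries K) (a b : ℕ) :
    MvPowerSeries.coeff (ind a b) (Fser f) =
      if a = b then PowerSeries.coeff a f else 0 := by
  show Fser f (ind a b) = _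
  simp [Fser]

lemma coeff_substXY (Q : MvPowerSeries (Fin 2) K) (a b : ℕ) :
    MvPowerSeries.coeff (ind a b) (substXY Q) =
      if a ≤ b then MvPowerSeries.coeff (ind a (b - a)) Q else 0 := by
  show substXY Q (ind a b) = _
  simp [substXY, ind]
lemma coeff_f_mul_ucol (Q : MvPowerSeries (Fin 2) K) {f : PowerSeries K}
    (hf0 : PowerSeries.constantCoeff f = 0) (l m : ℕ) :
    PowerSeries.coeff m (f * ucol Q f l) =
      ∑ i ∈ range (m + 1), ∑ j ∈ range (m + 1),
        MvPowerSeries.coeff (ind i (l + 1 + j)) Q *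
          PowerSeries.coeff (m - i) (f ^ (j + 1)) := by
  have step1 : PowerSeries.coeff m (f * ucol Q f l) =
      ∑ k ∈ range (m + 1), ∑ i ∈ range (m - k + 1), ∑ j ∈ range (m - k + 1),
        PowerSeries.coeff k f *
          (MvPowerSeries.coeff (ind i (l + 1 + j)) Q *
            PowerSeries.coeff (m - k - i) (f ^ j)) := by
    rw [PowerSeries.coeff_mul, Finset.Nat.sum_antidiagonal_eq_sum_range_succ_mk]
    simp only [ucol, PowerSeries.coeff_mk, Finset.mul_sum]
  have step2 : ∀ k ∈ range (m + 1), ∀ i ∈ range (m - k + 1),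
      ∑ j ∈ range (m - k + 1),
        PowerSeries.coeff k f *
          (MvPowerSeries.coeff (ind i (l + 1 + j)) Q *
            PowerSeries.coeff (m - k - i) (f ^ j))
      = ∑ j ∈ range (m + 1),
        PowerSeries.coeff k f *
          (MvPowerSeries.coeff (ind i (l + 1 + j)) Q *
            PowerSeries.coeff (m - k - i) (f ^ j)) := by
    intro k hk i hi
    rw [mem_range] at hk hi
    apply Finset.sum_subset
    · apply Finset.range_subset_range.mpr; omega
    · intro j hj hj'
      rw [mem_range] at hj hj'
      rw [coeff_pow_eq_zero hf0 (by omega)]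
      ring
  have step3 : ∀ i ∈ range (m + 1), ∀ j ∈ range (m + 1),
      MvPowerSeries.coeff (ind i (l + 1 + j)) Q *
        PowerSeries.coeff (m - i) (f ^ (j + 1))
      = ∑ k ∈ range (m - i + 1),
        MvPowerSeries.coeff (ind i (l + 1 + j)) Q *
          (PowerSeries.coeff k f * PowerSeries.coeff (m - i - k) (f ^ j)) := by
    intro i _ j _
    rw [pow_succ', PowerSeries.coeff_mul, Finset.Nat.sum_antidiagonal_eq_sum_range_succ_mk,
      Finset.mul_sum]
  calc PowerSeries.coeff m (f * ucol Q f l)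
      = ∑ k ∈ range (m + 1), ∑ i ∈ range (m - k + 1), ∑ j ∈ range (m + 1),
          PowerSeries.coeff k f *
            (MvPowerSeries.coeff (ind i (l + 1 + j)) Q *
              PowerSeries.coeff (m - k - i) (f ^ j)) := by
        rw [step1]
        exact Finset.sum_congr rfl fun k hk => Finset.sum_congr rfl (step2 k hk)
    _ = ∑ i ∈ range (m + 1), ∑ k ∈ range (m - i + 1), ∑ j ∈ range (m + 1),
          PowerSeries.coeff k f *
            (MvPowerSeries.coeff (ind i (l + 1 + j)) Q *
              PowerSeries.coeff (m - k - i) (f ^ j)) := triangle_swap m _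
    _ = ∑ i ∈ range (m + 1), ∑ j ∈ range (m + 1), ∑ k ∈ range (m - i + 1),
          PowerSeries.coeff k f *
            (MvPowerSeries.coeff (ind i (l + 1 + j)) Q *
              PowerSeries.coeff (m - k - i) (f ^ j)) :=
        Finset.sum_congr rfl fun i _ => Finset.sum_comm
    _ = ∑ i ∈ range (m + 1), ∑ j ∈ range (m + 1),
          MvPowerSeries.coeff (ind i (l + 1 + j)) Q *
            PowerSeries.coeff (m - i) (f ^ (j + 1)) := by
        refine Finset.sum_congr rfl fun i hi => Finset.sum_congr rfl fun j hj => ?_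
        rw [step3 i hi j hj]
        refine Finset.sum_congr rfl fun k hk => ?_
        rw [Nat.sub_right_comm]
        ring
lemma split_sum (Q : MvPowerSeries (Fin 2) K) {f : PowerSeries K}
    (hf0 : PowerSeries.constantCoeff f = 0) (l m : ℕ) :
    ∑ i ∈ range (m + 1), ∑ j ∈ range (m + 1),
        MvPowerSeries.coeff (ind i (l + j)) Q * PowerSeries.coeff (m - i) (f ^ j)
      = MvPowerSeries.coeff (ind m l) Q +
        ∑ i ∈ range (m + 1), ∑ j ∈ range (m + 1),
          MvPowerSeries.coeff (ind i (l + 1 + j)) Q *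
            PowerSeries.coeff (m - i) (f ^ (j + 1)) := by
  have inner : ∀ i ∈ range (m + 1),
      ∑ j ∈ range (m + 1),
          MvPowerSeries.coeff (ind i (l + j)) Q * PowerSeries.coeff (m - i) (f ^ j)
        = (∑ j ∈ range (m + 1),
            MvPowerSeries.coeff (ind i (l + 1 + j)) Q *
              PowerSeries.coeff (m - i) (f ^ (j + 1))) +
          MvPowerSeries.coeff (ind i l) Q * PowerSeries.coeff (m - i) (1 : PowerSeries K) := by
    intro i hi
    rw [mem_range] at hi
    rw [Finset.sum_range_succ']
    congr 1
    · rw [Finset.sum_range_succ,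
        coeff_pow_eq_zero hf0 (show m - i < m + 1 by omega), mul_zero, add_zero]
      refine Finset.sum_congr rfl fun j _ => ?_
      have : l + (j + 1) = l + 1 + j := by omega
      rw [this]
  rw [Finset.sum_congr rfl inner, Finset.sum_add_distrib, add_comm]
  congr 1
  rw [Finset.sum_eq_single m]
  · simp
  · intro i hi hne
    rw [mem_range] at hi
    rw [PowerSeries.coeff_one, if_neg (by omega), mul_zero]
  · intro h
    exact absurd (self_mem_range_succ m) h

lemma ucol_succ (Q : MvPowerSeries (Fin 2) K) {f : PowerSeries K}
    (hf0 : PowerSeries.constantCoeff f = 0) (l m : ℕ) :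
    PowerSeries.coeff m (ucol Q f l)
      = MvPowerSeries.coeff (ind m (l + 1)) Q +
        PowerSeries.coeff m (f * ucol Q f (l + 1)) := by
  have : PowerSeries.coeff m (ucol Q f l)
      = ∑ i ∈ range (m + 1), ∑ j ∈ range (m + 1),
          MvPowerSeries.coeff (ind i (l + 1 + j)) Q * PowerSeries.coeff (m - i) (f ^ j) := by
    simp [ucol]
  rw [this, split_sum Q hf0 (l + 1) m, coeff_f_mul_ucol Q hf0 (l + 1) m]

lemma f_mul_ucol_zero {Q : MvPowerSeries (Fin 2) K} {f : PowerSeries K}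
    (hf0 : PowerSeries.constantCoeff f = 0) (hQf : substY Q f = 0) (m : ℕ) :
    PowerSeries.coeff m (f * ucol Q f 0) = - MvPowerSeries.coeff (ind m 0) Q := by
  have h0 : PowerSeries.coeff m (substY Q f) = 0 := by rw [hQf]; simp
  rw [substY, PowerSeries.coeff_mk] at h0
  have h1 : ∑ i ∈ range (m + 1), ∑ j ∈ range (m + 1),
      MvPowerSeries.coeff (ind i (0 + j)) Q * PowerSeries.coeff (m - i) (f ^ j) = 0 := by
    rw [← h0]
    refine Finset.sum_congr rfl fun i _ => Finset.sum_congr rfl fun j _ => ?_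
    rw [Nat.zero_add]
    rfl
  rw [split_sum Q hf0 0 m] at h1
  rw [coeff_f_mul_ucol Q hf0 0 m]
  linear_combination h1
lemma coeff_Xpow_mul (k : ℕ) (Z : MvPowerSeries (Fin 2) K) (a b : ℕ) :
    MvPowerSeries.coeff (ind a b) ((MvPowerSeries.X 1 : MvPowerSeries (Fin 2) K) ^ k * Z) =
      if k ≤ b then MvPowerSeries.coeff (ind a (b - k)) Z else 0 := by
  have hsub : k ≤ b → ind a b - Finsupp.single 1 k = ind a (b - k) := by
    intro h
    ext i
    fin_cases i <;> simp [Finsupp.tsub_apply, Finsupp.single_apply]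
  have hle : Finsupp.single 1 k ≤ ind a b ↔ k ≤ b := by
    constructor
    · intro h; simpa using h 1
    · intro h i; fin_cases i <;> simp [Finsupp.single_apply]; omega
  rw [MvPowerSeries.X_pow_eq, MvPowerSeries.coeff_monomial_mul]
  by_cases h : k ≤ b
  · rw [if_pos (hle.mpr h), hsub h, one_mul, if_pos h]
  · rw [if_neg (fun hc => h (hle.mp hc)), if_neg h]

lemma coeff_X_mul (Z : MvPowerSeries (Fin 2) K) (a b : ℕ) :
    MvPowerSeries.coeff (ind a b) ((MvPowerSeries.X 1 : MvPowerSeries (Fin 2) K) * Z) =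
      if 1 ≤ b then MvPowerSeries.coeff (ind a (b - 1)) Z else 0 := by
  rw [← pow_one (MvPowerSeries.X 1 : MvPowerSeries (Fin 2) K), coeff_Xpow_mul]

lemma coeff_Fser_mul (f : PowerSeries K) (Z : MvPowerSeries (Fin 2) K) (a b : ℕ) :
    MvPowerSeries.coeff (ind a b) (Fser f * Z) =
      ∑ k ∈ range (a + 1), if k ≤ b then
        PowerSeries.coeff k f * MvPowerSeries.coeff (ind (a - k) (b - k)) Z else 0 := by
  rw [coeff_mul_ind]
  refine Finset.sum_congr rfl fun i _ => ?_
  have : ∀ j ∈ range (b + 1),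
      MvPowerSeries.coeff (ind i j) (Fser f) * MvPowerSeries.coeff (ind (a - i) (b - j)) Z
      = if i = j then PowerSeries.coeff i f * MvPowerSeries.coeff (ind (a - i) (b - j)) Z
        else 0 := by
    intro j _
    rw [coeff_Fser]
    split <;> simp
  rw [Finset.sum_congr rfl this, Finset.sum_ite_eq (range (b + 1)) i
    (fun j => PowerSeries.coeff i f * MvPowerSeries.coeff (ind (a - i) (b - j)) Z),
    ]
  simp only [mem_range, Nat.lt_succ_iff]

lemma sum_coeff_mul (f g : PowerSeries K) (a : ℕ) :
    ∑ k ∈ range (a + 1), PowerSeries.coeff k f * PowerSeries.coeff (a - k) g =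
      PowerSeries.coeff a (f * g) := by
  rw [PowerSeries.coeff_mul, Finset.Nat.sum_antidiagonal_eq_sum_range_succ_mk]

lemma keyD {Q : MvPowerSeries (Fin 2) K} {f : PowerSeries K}
    (hf0 : PowerSeries.constantCoeff f = 0) (hQf : substY Q f = 0) :
    substXY Q = (MvPowerSeries.X 1 - Fser f) * Tser Q f := by
  suffices h : ∀ a b : ℕ, MvPowerSeries.coeff (ind a b) (substXY Q) =
      MvPowerSeries.coeff (ind a b) ((MvPowerSeries.X 1 - Fser f) * Tser Q f) by
    ext d
    rw [eq_ind d]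
    exact h (d 0) (d 1)
  intro a b
  rw [sub_mul, map_sub, coeff_substXY, coeff_X_mul, coeff_Fser_mul]
  rcases lt_or_ge b a with hba | hab
  · -- a > b : everything vanishes
    rw [if_neg (by omega)]
    have h1 : (if 1 ≤ b then MvPowerSeries.coeff (ind a (b - 1)) (Tser Q f) else 0) = 0 := by
      split
      · rw [coeff_Tser, if_neg (by omega)]
      · rfl
    have h2 : ∀ k ∈ range (a + 1), (if k ≤ b then
        PowerSeries.coeff k f * MvPowerSeries.coeff (ind (a - k) (b - k)) (Tser Q f)
        else 0) = 0 := by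
      intro k hk
      rw [mem_range] at hk
      split
      · rw [coeff_Tser, if_neg (by omega), mul_zero]
      · rfl
    rw [h1, Finset.sum_eq_zero h2, sub_zero]
  · rcases eq_or_lt_of_le hab with heq | hlt
    · -- a = b
      subst heq
      rw [if_pos le_rfl, Nat.sub_self]
      have h1 : (if 1 ≤ a then MvPowerSeries.coeff (ind a (a - 1)) (Tser Q f) else 0) = 0 := by
        split
        · rw [coeff_Tser, if_neg (by omega)]
        · rfl
      have h2 : ∀ k ∈ range (a + 1), (if k ≤ a then
          PowerSeries.coeff k f * MvPowerSeries.coeff (ind (a - k) (a - k)) (Tser Q f)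
          else 0) = PowerSeries.coeff k f * PowerSeries.coeff (a - k) (ucol Q f 0) := by
        intro k hk
        rw [mem_range] at hk
        rw [if_pos (by omega), coeff_Tser, if_pos le_rfl, Nat.sub_self]
      rw [h1, Finset.sum_congr rfl h2, sum_coeff_mul, f_mul_ucol_zero hf0 hQf, zero_sub, neg_neg]
    · -- a < b
      rw [if_pos hab, if_pos (by omega), coeff_Tser, if_pos (by omega)]
      have h2 : ∀ k ∈ range (a + 1), (if k ≤ b then
          PowerSeries.coeff k f * MvPowerSeries.coeff (ind (a - k) (b - k)) (Tser Q f)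
          else 0) = PowerSeries.coeff k f * PowerSeries.coeff (a - k) (ucol Q f (b - a)) := by
        intro k hk
        rw [mem_range] at hk
        rw [if_pos (by omega), coeff_Tser, if_pos (by omega)]
        have e3 : b - k - (a - k) = b - a := by omega
        rw [e3]
      rw [Finset.sum_congr rfl h2, sum_coeff_mul]
      have := ucol_succ Q hf0 (b - a - 1) a
      have e1 : b - a - 1 + 1 = b - a := by omega
      have e2 : b - 1 - a = b - a - 1 := by omega
      rw [e1] at this
      rw [e2, this]
      ring
lemma ind_inj {a b c d : ℕ} (h : ind a b = ind c d) : a = c ∧ b = d := by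
  constructor
  · have := congrArg (fun x => x 0) h; simpa using this
  · have := congrArg (fun x => x 1) h; simpa using this

lemma coeff_pderivY (Q : MvPowerSeries (Fin 2) K) (a c : ℕ) :
    MvPowerSeries.coeff (ind a c) (pderivY Q) =
      ((c + 1 : ℕ) : K) * MvPowerSeries.coeff (ind a (c + 1)) Q := by
  show pderivY Q (ind a c) = _
  rw [pderivY]
  have : ind a c + Finsupp.single 1 1 = ind a (c + 1) := by
    rw [single_one_eq, ind_add]
    norm_num
  rw [ind_apply1, this]

lemma keyE {Q : MvPowerSeries (Fin 2) K} {f : PowerSeries K}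
    (hf0 : PowerSeries.constantCoeff f = 0) :
    substXY (pderivY Q) = Tser Q f + (MvPowerSeries.X 1 - Fser f) * Tser' Q f := by
  suffices h : ∀ a b : ℕ, MvPowerSeries.coeff (ind a b) (substXY (pderivY Q)) =
      MvPowerSeries.coeff (ind a b)
        (Tser Q f + (MvPowerSeries.X 1 - Fser f) * Tser' Q f) by
    ext d
    rw [eq_ind d]
    exact h (d 0) (d 1)
  intro a b
  rw [map_add, sub_mul, map_sub, coeff_substXY, coeff_Tser, coeff_X_mul, coeff_Fser_mul]
  rcases lt_or_ge b a with hba | hab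
  · rw [if_neg (by omega), if_neg (by omega)]
    have h1 : (if 1 ≤ b then MvPowerSeries.coeff (ind a (b - 1)) (Tser' Q f) else 0) = 0 := by
      split
      · rw [coeff_Tser', if_neg (by omega)]
      · rfl
    have h2 : ∀ k ∈ range (a + 1), (if k ≤ b then
        PowerSeries.coeff k f * MvPowerSeries.coeff (ind (a - k) (b - k)) (Tser' Q f)
        else 0) = 0 := by
      intro k hk
      rw [mem_range] at hk
      split
      · rw [coeff_Tser', if_neg (by omega), mul_zero]
      · rfl
    rw [h1, Finset.sum_eq_zero h2]
    ring
  · rw [if_pos hab, if_pos hab, coeff_pderivY]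
    have h2 : ∀ k ∈ range (a + 1), (if k ≤ b then
        PowerSeries.coeff k f * MvPowerSeries.coeff (ind (a - k) (b - k)) (Tser' Q f)
        else 0) = ((b - a + 1 : ℕ) : K) *
          (PowerSeries.coeff k f * PowerSeries.coeff (a - k) (ucol Q f (b - a + 1))) := by
      intro k hk
      rw [mem_range] at hk
      rw [if_pos (by omega), coeff_Tser', if_pos (by omega)]
      have e3 : b - k - (a - k) = b - a := by omega
      rw [e3]
      ring
    rw [Finset.sum_congr rfl h2, ← Finset.mul_sum, sum_coeff_mul]
    rcases eq_or_lt_of_le hab with heq | hlt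
    · -- a = b
      have e0 : b - a = 0 := by omega
      rw [e0]
      have h1 : (if 1 ≤ b then MvPowerSeries.coeff (ind a (b - 1)) (Tser' Q f) else 0) = 0 := by
        split
        · rw [coeff_Tser', if_neg (by omega)]
        · rfl
      rw [h1, ucol_succ Q hf0 0 a]
      push_cast
      ring
    · -- a < b
      have h1 : (if 1 ≤ b then MvPowerSeries.coeff (ind a (b - 1)) (Tser' Q f) else 0)
          = ((b - a : ℕ) : K) * PowerSeries.coeff a (ucol Q f (b - a)) := by
        rw [if_pos (by omega), coeff_Tser', if_pos (by omega)]
        have e4 : b - 1 - a + 1 = b - a := by omega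
        rw [e4]
      rw [h1, ucol_succ Q hf0 (b - a) a]
      push_cast
      ring

lemma keyF {f : PowerSeries K} (hf0 : PowerSeries.constantCoeff f = 0) :
    (MvPowerSeries.X 1 - Fser f) * Vser f = (MvPowerSeries.X 1 : MvPowerSeries (Fin 2) K) := by
  suffices h : ∀ a b : ℕ, MvPowerSeries.coeff (ind a b)
      ((MvPowerSeries.X 1 - Fser f) * Vser f) =
      MvPowerSeries.coeff (ind a b) (MvPowerSeries.X 1 : MvPowerSeries (Fin 2) K) by
    ext d
    rw [eq_ind d]
    exact h (d 0) (d 1)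
  intro a b
  have hX : MvPowerSeries.coeff (ind a b) (MvPowerSeries.X 1 : MvPowerSeries (Fin 2) K)
      = if a = 0 ∧ b = 1 then 1 else 0 := by
    rw [MvPowerSeries.coeff_X]
    by_cases h : a = 0 ∧ b = 1
    · rw [if_pos h, if_pos]
      rw [single_one_eq, h.1, h.2]
    · rw [if_neg h, if_neg]
      intro hc
      rw [single_one_eq] at hc
      exact h (ind_inj hc)
  rw [sub_mul, map_sub, coeff_X_mul, coeff_Fser_mul, hX]
  rcases lt_or_ge a b with hlt | hge
  · -- a < b
    have h2 : ∀ k ∈ range (a + 1), (if k ≤ b then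
        PowerSeries.coeff k f * MvPowerSeries.coeff (ind (a - k) (b - k)) (Vser f)
        else 0) = 0 := by
      intro k hk
      rw [mem_range] at hk
      rw [if_pos (by omega), coeff_Vser, if_neg (by omega), mul_zero]
    rw [Finset.sum_eq_zero h2, sub_zero, if_pos (by omega), coeff_Vser]
    by_cases hb : b = a + 1
    · rw [if_pos (by omega)]
      have e : a - (b - 1) = 0 := by omega
      rw [e, pow_zero, PowerSeries.coeff_one]
      by_cases ha : a = 0
      · rw [if_pos ha, if_pos ⟨ha, by omega⟩]
      · rw [if_neg ha, if_neg (by tauto)]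
    · rw [if_neg (by omega), if_neg (by omega)]
  · -- b ≤ a
    rw [if_neg (show ¬(a = 0 ∧ b = 1) by omega)]
    by_cases hb : 1 ≤ b
    · rw [if_pos hb, coeff_Vser, if_pos (by omega)]
      have h2 : ∀ k ∈ range (a + 1), (if k ≤ b then
          PowerSeries.coeff k f * MvPowerSeries.coeff (ind (a - k) (b - k)) (Vser f)
          else 0) = PowerSeries.coeff k f * PowerSeries.coeff (a - k) (f ^ (a - b)) := by
        intro k hk
        rw [mem_range] at hk
        by_cases hkb : k ≤ b
        · rw [if_pos hkb, coeff_Vser, if_pos (by omega)]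
          have e : a - k - (b - k) = a - b := by omega
          rw [e]
        · rw [if_neg hkb, coeff_pow_eq_zero hf0 (by omega), mul_zero]
      rw [Finset.sum_congr rfl h2, sum_coeff_mul, ← pow_succ']
      have e : a - (b - 1) = a - b + 1 := by omega
      rw [e]
      exact sub_self _
    · rw [if_neg hb]
      have hb0 : b = 0 := by omega
      have h2 : ∀ k ∈ range (a + 1), (if k ≤ b then
          PowerSeries.coeff k f * MvPowerSeries.coeff (ind (a - k) (b - k)) (Vser f)
          else 0) = 0 := by
        intro k hk
        by_cases hkb : k ≤ b
        · rw [if_pos hkb]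
          have : k = 0 := by omega
          subst this
          rw [PowerSeries.coeff_zero_eq_constantCoeff, hf0, zero_mul]
        · rw [if_neg hkb]
      rw [Finset.sum_eq_zero h2]
      ring
lemma inv_triangular {T W : MvPowerSeries (Fin 2) K} (hWT : W * T = 1)
    (hTri : ∀ a b : ℕ, b < a → MvPowerSeries.coeff (ind a b) T = 0)
    (hT0 : MvPowerSeries.coeff (ind 0 0) T ≠ 0) :
    ∀ a b : ℕ, b < a → MvPowerSeries.coeff (ind a b) W = 0 := by
  suffices H : ∀ n a b : ℕ, a + b ≤ n → b < a → MvPowerSeries.coeff (ind a b) W = 0 by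
    exact fun a b h => H (a + b) a b le_rfl h
  intro n
  induction n with
  | zero => intro a b h1 h2; omega
  | succ n ih =>
    intro a b h1 h2
    have hone : MvPowerSeries.coeff (ind a b) (W * T) = 0 := by
      rw [hWT, MvPowerSeries.coeff_one, if_neg]
      intro hc
      have := congrArg (fun x => x 0) hc
      simp at this
      omega
    rw [coeff_mul_ind] at hone
    have main : ∑ i ∈ range (a + 1), ∑ j ∈ range (b + 1),
        MvPowerSeries.coeff (ind i j) W * MvPowerSeries.coeff (ind (a - i) (b - j)) T
        = MvPowerSeries.coeff (ind a b) W * MvPowerSeries.coeff (ind 0 0) T := by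
      rw [Finset.sum_eq_single a]
      · rw [Finset.sum_eq_single b]
        · rw [Nat.sub_self, Nat.sub_self]
        · intro j hj hjb
          rw [mem_range] at hj
          rw [ih a j (by omega) (by omega), zero_mul]
        · intro h
          exact absurd (self_mem_range_succ b) h
      · intro i hi hia
        rw [mem_range] at hi
        apply Finset.sum_eq_zero
        intro j hj
        rw [mem_range] at hj
        rcases lt_or_ge j i with hji | hij
        · rw [ih i j (by omega) (by omega), zero_mul]
        · rw [hTri (a - i) (b - j) (by omega), mul_zero]
      · intro h
        exact absurd (self_mem_range_succ a) h
    rw [main] at hone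
    exact (mul_eq_zero.mp hone).resolve_right hT0
lemma constCoeff_Tser (Q : MvPowerSeries (Fin 2) K) (f : PowerSeries K) :
    MvPowerSeries.coeff (ind 0 0) (Tser Q f) = MvPowerSeries.coeff (ind 0 1) Q := by
  rw [coeff_Tser, if_pos le_rfl]
  show PowerSeries.coeff 0 (ucol Q f 0) = _
  simp [ucol]

end Furst

open Furst Finset in
/-- **Furstenberg-type diagonal formula over an arbitrary field.**
If `f(0) = 0`, `Q(X, f(X)) = 0` and `Q'_Y(0,0) ≠ 0`, then there is a unique
power series `S` with `S · Q(XY,Y) = Y² · Q'_Y(XY,Y)`, and for every `n` the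
coefficient of `Xⁿ` in `f` equals the coefficient of `Xⁿ Yⁿ` in `S`; that is,
`f(X) = 𝒟(Y² Q'_Y(XY,Y) / Q(XY,Y))`. -/
theorem furstenberg_diagonal {K : Type*} [Field K]
    (Q : MvPowerSeries (Fin 2) K) (f : PowerSeries K)
    (hf0 : PowerSeries.constantCoeff f = 0)
    (hQf : substY Q f = 0)
    (hQY : MvPowerSeries.coeff (Finsupp.single 1 1) Q ≠ 0) :
    (∃! S : MvPowerSeries (Fin 2) K,
      S * substXY Q = MvPowerSeries.X 1 ^ 2 * substXY (pderivY Q)) ∧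
    ∀ S : MvPowerSeries (Fin 2) K,
      S * substXY Q = MvPowerSeries.X 1 ^ 2 * substXY (pderivY Q) →
      ∀ n : ℕ,
        PowerSeries.coeff n f =
          MvPowerSeries.coeff (Finsupp.single 0 n + Finsupp.single 1 n) S := by
  have hq01 : MvPowerSeries.coeff (ind 0 1) Q ≠ 0 := by
    rwa [← single_one_eq]
  -- T is a unit
  have hT0 : MvPowerSeries.coeff (ind 0 0) (Tser Q f) ≠ 0 := by
    rw [constCoeff_Tser]; exact hq01
  have hTunit : IsUnit (Tser Q f) := by
    rw [MvPowerSeries.isUnit_iff_constantCoeff]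
    rw [← MvPowerSeries.coeff_zero_eq_constantCoeff_apply, ← ind_zero] at *
    exact (isUnit_iff_ne_zero).mpr hT0
  obtain ⟨u, hu⟩ := hTunit
  set W : MvPowerSeries (Fin 2) K := ((u⁻¹ : _) : MvPowerSeries (Fin 2) K) with hW
  have hWT : W * Tser Q f = 1 := by
    rw [hW, ← hu, Units.inv_mul]
  have hTri : ∀ a b : ℕ, b < a → MvPowerSeries.coeff (ind a b) (Tser Q f) = 0 := by
    intro a b h
    rw [coeff_Tser, if_neg (by omega)]
  have hWtri := inv_triangular hWT hTri hT0
  -- the solution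
  set S₀ : MvPowerSeries (Fin 2) K :=
    MvPowerSeries.X 1 * Vser f + MvPowerSeries.X 1 ^ 2 * (Tser' Q f * W) with hS₀
  have hS : S₀ * substXY Q = MvPowerSeries.X 1 ^ 2 * substXY (pderivY Q) := by
    rw [keyD hf0 hQf, keyE hf0, hS₀]
    linear_combination (MvPowerSeries.X 1 * Tser Q f) * keyF hf0 (K := K) (f := f) +
      (MvPowerSeries.X 1 ^ 2 * (Tser' Q f * (MvPowerSeries.X 1 - Fser f))) * hWT
  have hQne : substXY Q ≠ 0 := by
    intro hc
    apply hq01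
    have := congrArg (MvPowerSeries.coeff (ind 0 1)) hc
    rw [coeff_substXY, if_pos (by omega)] at this
    simpa using this
  have huniq : ∀ S : MvPowerSeries (Fin 2) K,
      S * substXY Q = MvPowerSeries.X 1 ^ 2 * substXY (pderivY Q) → S = S₀ :=
    fun S hy => mul_right_cancel₀ hQne (hy.trans hS.symm)
  constructor
  · exact ⟨S₀, hS, huniq⟩
  · intro S hy n
    rw [huniq S hy]
    show PowerSeries.coeff n f = MvPowerSeries.coeff (ind n n) S₀
    rw [hS₀, map_add, coeff_X_mul, coeff_Xpow_mul]
    have h2 : (if 2 ≤ n then MvPowerSeries.coeff (ind n (n - 2)) (Tser' Q f * W) else 0)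
        = 0 := by
      split
      · rw [coeff_mul_ind]
        apply Finset.sum_eq_zero
        intro i hi
        apply Finset.sum_eq_zero
        intro j hj
        rw [mem_range] at hi hj
        rcases le_or_gt i j with hij | hji
        · rw [hWtri (n - i) (n - 2 - j) (by omega), mul_zero]
        · rw [coeff_Tser', if_neg (by omega), zero_mul]
      · rfl
    rw [h2, add_zero]
    by_cases hn : 1 ≤ n
    · rw [if_pos hn, coeff_Vser, if_pos (by omega)]
      have e : n - (n - 1) = 1 := by omega
      rw [e, pow_one]
    · rw [if_neg hn]
      have : n = 0 := by omega
      subst this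
      rw [PowerSeries.coeff_zero_eq_constantCoeff, hf0]
end
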